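/- arXiv:0901.1682 — 11 statements merged into one kernel-verified Lean document; each statement's English description precedes it below -/
import Mathlib

section
/- Let n, m, ν be positive real numbers with n ≠ m. Set λ = (m − n)²/(8ν) − n − m and d = (n + m)/2 − ν. Then the 4×4 real symmetric matrix V₁ = [[n+λ, 0, −(d+λ), 0], [0, n, 0, d], [−(d+λ), 0, m+λ, 0], [0, d, 0, m]] is not positive definite; in particular, its characteristic polynomial has a quadratic factor whose constant term equals −ν(n + m + ν) < 0, so V₁ has a negative eigenvalue. -/
open Matrix Polynomial

noncomputable section

/-- Characteristic polynomial of the "checkerboard" block 4×4 matrix factors as the product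
of the charpolys of its two 2×2 blocks. -/
lemma charpoly_block_aux (a b c p q r : ℝ) :
    (!![a, 0, b, 0; 0, p, 0, q; b, 0, c, 0; 0, q, 0, r] : Matrix (Fin 4) (Fin 4) ℝ).charpoly
      = (X ^ 2 + C (-(a + c)) * X + C (a * c - b ^ 2)) *
        (X ^ 2 + C (-(p + r)) * X + C (p * r - q ^ 2)) := by
  rw [Matrix.charpoly]
  have h : (!![a, 0, b, 0; 0, p, 0, q; b, 0, c, 0; 0, q, 0, r] :
      Matrix (Fin 4) (Fin 4) ℝ).charmatrix
      = !![X - C a, 0, -C b, 0; 0, X - C p, 0, -C q;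
           -C b, 0, X - C c, 0; 0, -C q, 0, X - C r] := by
    ext i j
    fin_cases i <;> fin_cases j <;>
      simp [charmatrix_apply_eq, charmatrix_apply_ne]
  rw [h]
  simp [Matrix.det_succ_row_zero, Fin.sum_univ_succ,
    show (Fin.succAbove (2 : Fin 4) (2 : Fin 3)) = 3 by decide]
  ring

/-- Action of the block matrix on a vector supported in coordinates 0 and 2. -/
lemma mulVec_block_aux (a b c p q r u w : ℝ) :
    (!![a, 0, b, 0; 0, p, 0, q; b, 0, c, 0; 0, q, 0, r] : Matrix (Fin 4) (Fin 4) ℝ) *ᵥ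
      ![u, 0, w, 0] = ![a * u + b * w, 0, b * u + c * w, 0] := by
  funext i
  fin_cases i <;>
    simp [Matrix.mulVec, dotProduct, Fin.sum_univ_four]

/-- the standard form III covariance matrix `V₁` obtained by imposing
`n + m − 2d = 2ν` and the lowest PT symplectic eigenvalue constraint (with
`λ = (m−n)²/(8ν) − n − m`) in the non-symmetric case `n ≠ m` is not positive definite:
its characteristic polynomial has a quadratic factor with constant term
`−ν(n + m + ν) < 0`, so `V₁` has a negative eigenvalue. -/
theorem standard_form_III_not_posDef (n m ν : ℝ)
    (hn : 0 < n) (hm : 0 < m) (hν : 0 < ν) (hnm : n ≠ m) :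
    let lam : ℝ := (m - n) ^ 2 / (8 * ν) - n - m
    let d : ℝ := (n + m) / 2 - ν
    let V₁ : Matrix (Fin 4) (Fin 4) ℝ :=
      !![n + lam, 0, -(d + lam), 0;
         0, n, 0, d;
         -(d + lam), 0, m + lam, 0;
         0, d, 0, m]
    ¬ V₁.PosDef ∧
      (∃ c₁ g₁ g₀ : ℝ,
        V₁.charpoly =
          (X ^ 2 + Polynomial.C c₁ * X + Polynomial.C (-(ν * (n + m + ν)))) *
            (X ^ 2 + Polynomial.C g₁ * X + Polynomial.C g₀)) ∧
      -(ν * (n + m + ν)) < 0 ∧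
      ∃ x : ℝ, x < 0 ∧ Module.End.HasEigenvalue (Matrix.toLin' V₁) x := by
  intro lam d V₁
  obtain ⟨a, ha⟩ : ∃ a : ℝ, a = n + lam := ⟨_, rfl⟩
  obtain ⟨b, hb⟩ : ∃ b : ℝ, b = -(d + lam) := ⟨_, rfl⟩
  obtain ⟨c, hc⟩ : ∃ c : ℝ, c = m + lam := ⟨_, rfl⟩
  have hV : V₁ = !![a, 0, b, 0; 0, n, 0, d; b, 0, c, 0; 0, d, 0, m] := by
    rw [ha, hb, hc]
  -- the key determinant identity
  have hk : a * c - b ^ 2 = -(ν * (n + m + ν)) := by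
    have hν' : ν ≠ 0 := ne_of_gt hν
    rw [ha, hb, hc]
    show (n + ((m - n) ^ 2 / (8 * ν) - n - m)) * (m + ((m - n) ^ 2 / (8 * ν) - n - m)) -
      (-(((n + m) / 2 - ν) + ((m - n) ^ 2 / (8 * ν) - n - m))) ^ 2 = -(ν * (n + m + ν))
    field_simp
    ring
  have hkneg : -(ν * (n + m + ν)) < 0 := by nlinarith
  have hk' : a * c - b ^ 2 < 0 := by rw [hk]; exact hkneg
  -- the negative root of X² - (a+c)X + (ac - b²)
  obtain ⟨s, hs⟩ : ∃ s : ℝ, s = Real.sqrt ((a + c) ^ 2 - 4 * (a * c - b ^ 2)) := ⟨_, rfl⟩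
  have hs2 : s ^ 2 = (a + c) ^ 2 - 4 * (a * c - b ^ 2) := by
    rw [hs, Real.sq_sqrt]; nlinarith
  have hs0 : 0 ≤ s := hs ▸ Real.sqrt_nonneg _
  obtain ⟨x, hx⟩ : ∃ x : ℝ, x = ((a + c) - s) / 2 := ⟨_, rfl⟩
  have hsgt : |a + c| < s := by
    rw [hs, ← Real.sqrt_sq_eq_abs]
    exact Real.sqrt_lt_sqrt (by positivity) (by nlinarith)
  have hxneg : x < 0 := by
    have h3 := (abs_lt.mp hsgt).2
    rw [hx]; linarith
  have hroot : x ^ 2 - (a + c) * x + (a * c - b ^ 2) = 0 := by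
    rw [hx]; linear_combination hs2 / 4
  -- an eigenvector for x
  obtain ⟨v, hv0, hvv⟩ : ∃ v : Fin 4 → ℝ, v ≠ 0 ∧ V₁ *ᵥ v = x • v := by
    by_cases hxa : x = a
    · -- then b = 0 and (1,0,0,0) is an eigenvector
      have hb0 : b = 0 := by
        have h4 : -(b ^ 2) = 0 := by linear_combination hroot - (x - c) * hxa
        nlinarith [sq_nonneg b]
      refine ⟨![1, 0, 0, 0], ?_, ?_⟩
      · intro h
        have := congrFun h 0
        simp at this
      · rw [hV, mulVec_block_aux]
        funext i
        fin_cases i <;> simp [hb0, hxa]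
    · refine ⟨![b, 0, x - a, 0], ?_, ?_⟩
      · intro h
        have h5 := congrFun h 2
        simp at h5
        exact hxa (by linarith)
      · rw [hV, mulVec_block_aux]
        funext i
        fin_cases i
        · simp; ring
        · simp
        · simp; linear_combination -hroot
        · simp
  have heig : Module.End.HasEigenvalue (Matrix.toLin' V₁) x := by
    apply Module.End.hasEigenvalue_of_hasEigenvector (x := v)
    refine ⟨Module.End.mem_eigenspace_iff.mpr ?_, hv0⟩
    rw [Matrix.toLin'_apply, hvv]
  refine ⟨?_, ?_, hkneg, x, hxneg, heig⟩
  · rintro hpd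
    have h1 := hpd.dotProduct_mulVec_pos hv0
    rw [hvv] at h1
    have hnn : (0:ℝ) ≤ v ⬝ᵥ v :=
      Finset.sum_nonneg fun i _ => mul_self_nonneg (v i)
    have hvpos : 0 < v ⬝ᵥ v :=
      hnn.lt_of_ne (fun h => hv0 (dotProduct_self_eq_zero.mp h.symm))
    have h6 : star v ⬝ᵥ (x • v) = x * (v ⬝ᵥ v) := by
      simp [dotProduct_smul, smul_eq_mul]
    rw [h6] at h1
    nlinarith
  · refine ⟨-(a + c), -(n + m), n * m - d ^ 2, ?_⟩
    rw [hV, charpoly_block_aux, hk]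
end
end

section
/- For every 2×2 real symmetric positive definite matrix N there exists S ∈ Sp(2,ℝ) such that S N Sᵀ = √(det N) · I₂; moreover, since tr N ≥ 2√(det N), the associated coherent-state teleportation fidelity does not decrease under this symplectic balancing: 2/√(4 + 4√(det N) + det N) ≥ 2/√(4 + 2·tr N + det N). -/
open Matrix

noncomputable section

/-- The 2×2 symplectic form `J = [[0,1],[-1,0]]`. -/
def J2 : Matrix (Fin 2) (Fin 2) ℝ := !![0, 1; -1, 0]

/-- every 2×2 real symmetric positive definite matrix `N` can be
balanced by a symplectic transformation, `S N Sᵀ = √(det N) · I₂`; moreover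
`tr N ≥ 2√(det N)` and the teleportation fidelity does not decrease under this
balancing. -/
theorem symplectic_balancing (N : Matrix (Fin 2) (Fin 2) ℝ)
    (hsymm : N.IsSymm) (hpd : N.PosDef) :
    (∃ S : Matrix (Fin 2) (Fin 2) ℝ, S * J2 * Sᵀ = J2 ∧
        S * N * Sᵀ = Real.sqrt N.det • (1 : Matrix (Fin 2) (Fin 2) ℝ)) ∧
      2 * Real.sqrt N.det ≤ N.trace ∧
      2 / Real.sqrt (4 + 2 * N.trace + N.det) ≤
        2 / Real.sqrt (4 + 4 * Real.sqrt N.det + N.det) := by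
  obtain ⟨a, b, c, hN⟩ : ∃ a b c, N = !![a, b; b, c] :=
    ⟨N 0 0, N 0 1, N 1 1, by
      ext i j
      fin_cases i <;> fin_cases j <;> simp [hsymm.apply 0 1]⟩
  subst hN
  have hdet : (!![a, b; b, c] : Matrix (Fin 2) (Fin 2) ℝ).det = a * c - b * b := by
    simp [Matrix.det_fin_two]
  have htr : (!![a, b; b, c] : Matrix (Fin 2) (Fin 2) ℝ).trace = a + c := by
    simp [Matrix.trace_fin_two]
  have hd : (0:ℝ) < a * c - b * b := hdet ▸ hpd.det_pos
  have ha0 : 0 < a := by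
    have := hpd.dotProduct_mulVec_pos (x := Pi.single 0 1) (fun h => by simpa using congrFun h 0)
    simpa [dotProduct, Matrix.mulVec, Fin.sum_univ_two, Pi.single_apply] using this
  have hc0 : 0 < c := by
    have := hpd.dotProduct_mulVec_pos (x := Pi.single 1 1) (fun h => by simpa using congrFun h 1)
    simpa [dotProduct, Matrix.mulVec, Fin.sum_univ_two, Pi.single_apply] using this
  rw [hdet, htr]
  set s := Real.sqrt (a * c - b * b) with hs
  have hs0 : 0 < s := Real.sqrt_pos.mpr hd
  have hs2 : s ^ 2 = a * c - b * b := Real.sq_sqrt hd.le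
  have hC : 0 < s * (a + c) + 2 * s ^ 2 := by positivity
  set k := (Real.sqrt (s * (a + c) + 2 * s ^ 2))⁻¹ with hk
  have hk2 : k ^ 2 * (s * (a + c) + 2 * s ^ 2) = 1 := by
    rw [hk, inv_pow, Real.sq_sqrt hC.le]
    exact inv_mul_cancel₀ hC.ne'
  clear_value s k
  have hT : (!![k * (c + s), -(k * b); -(k * b), k * (a + s)])ᵀ
      = !![k * (c + s), -(k * b); -(k * b), k * (a + s)] := by
    ext i j
    fin_cases i <;> fin_cases j <;> simp [Matrix.transpose_apply]
  refine ⟨⟨!![k * (c + s), -(k * b); -(k * b), k * (a + s)], ?_, ?_⟩, ?_, ?_⟩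
  · rw [hT]
    ext i j
    fin_cases i <;> fin_cases j <;>
      simp [Matrix.mul_apply, Matrix.transpose_apply, Fin.sum_univ_two, J2] <;>
      first
      | linear_combination hk2 - k ^ 2 * hs2
      | linear_combination -hk2 + k ^ 2 * hs2
      | ring
  · rw [hT]
    ext i j
    fin_cases i <;> fin_cases j <;>
      simp [Matrix.mul_apply, Matrix.transpose_apply, Fin.sum_univ_two, Matrix.one_apply] <;>
      first
      | linear_combination s * hk2 - k ^ 2 * (c + 2 * s) * hs2
      | linear_combination s * hk2 - k ^ 2 * (a + 2 * s) * hs2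
      | linear_combination -(s * hk2) + k ^ 2 * (c + 2 * s) * hs2
      | linear_combination -(s * hk2) + k ^ 2 * (a + 2 * s) * hs2
      | linear_combination k ^ 2 * b * hs2
      | linear_combination -(k ^ 2 * b) * hs2
      | ring
  · nlinarith [sq_nonneg (a - c), sq_nonneg b, hs2, ha0, hc0, hs0]
  · have h1 : (0:ℝ) < 4 + 4 * s + (a * c - b * b) := by positivity
    have h2 : 4 + 4 * s + (a * c - b * b) ≤ 4 + 2 * (a + c) + (a * c - b * b) := by
      nlinarith [sq_nonneg (a - c), sq_nonneg b, hs2, ha0, hc0, hs0]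
    have h3 : 0 < Real.sqrt (4 + 4 * s + (a * c - b * b)) := Real.sqrt_pos.mpr h1
    exact div_le_div_of_nonneg_left (by norm_num) h3 (Real.sqrt_le_sqrt h2)
end
end

section
/- Let a, b > 0 and let c₁, c₂ ≥ 0 satisfy c₁ < √(ab) and c₂ < √(ab). Then there exist r_a, r_b > 0 such that a(r_a − r_a⁻¹) = b(r_b − r_b⁻¹) = c₁·√(r_a r_b) − c₂/√(r_a r_b). -/
noncomputable section
namespace SF3

def g (y : ℝ) : ℝ := (y + Real.sqrt (y^2+4))/2

lemma sqrt_sq' (y : ℝ) : Real.sqrt (y^2+4) ^ 2 = y^2+4 :=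
  Real.sq_sqrt (by positivity)

lemma g_pos (y : ℝ) : 0 < g y := by
  have h1 := sqrt_sq' y
  have h2 := Real.sqrt_nonneg (y^2+4)
  unfold g
  nlinarith [sq_nonneg (y + Real.sqrt (y^2+4))]

lemma g_eq (y : ℝ) : g y - (g y)⁻¹ = y := by
  have h1 := sqrt_sq' y
  have hmul : g y * (g y - y) = 1 := by unfold g; nlinarith
  have hinv : (g y)⁻¹ = g y - y := inv_eq_of_mul_eq_one_right hmul
  linarith [hinv.symm.le]

lemma g_le {y : ℝ} (hy : 0 ≤ y) : g y ≤ y + 1 := by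
  have h : Real.sqrt (y^2+4) ≤ y + 2 := by
    have := Real.sqrt_le_sqrt (show y^2+4 ≤ (y+2)^2 by nlinarith)
    rwa [Real.sqrt_sq (by linarith)] at this
  unfold g; linarith

lemma g_mul_neg (y : ℝ) : g y * g (-y) = 1 := by
  have h1 := sqrt_sq' y
  have : (-y)^2 = y^2 := by ring
  unfold g; rw [this]; nlinarith

lemma g_ge {y : ℝ} (hy : y ≤ 0) : 1/(1-y) ≤ g y := by
  have h1 : g (-y) ≤ -y + 1 := g_le (by linarith)
  have h2 := g_mul_neg y
  have h3 := g_pos (-y)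
  have h4 := g_pos y
  rw [div_le_iff₀ (by linarith)]
  calc (1:ℝ) = g y * g (-y) := h2.symm
    _ ≤ g y * (1 - y) := by nlinarith

lemma g_cont : Continuous g := by
  unfold g
  fun_prop

lemma exists_s (a b c : ℝ) (ha : 0 < a) (hb : 0 < b) (hc : 0 ≤ c)
    (h : c < Real.sqrt (a*b)) :
    ∃ s : ℝ, 1 ≤ s ∧ c^2*(s+a)*(s+b) ≤ a*b*s^2 := by
  have hab : c^2 < a*b := by
    have h2 : c^2 < Real.sqrt (a*b) ^ 2 := by
      apply sq_lt_sq' (by linarith [Real.sqrt_nonneg (a*b)]) h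
    rwa [Real.sq_sqrt (by positivity)] at h2
  set ε := a*b - c^2 with hε
  have hεpos : 0 < ε := by simp [hε]; linarith
  refine ⟨max 1 ((c^2*(a+b)+c^2*(a*b))/ε), le_max_left _ _, ?_⟩
  set s := max 1 ((c^2*(a+b)+c^2*(a*b))/ε) with hs
  have hs1 : 1 ≤ s := le_max_left _ _
  have hs2 : (c^2*(a+b)+c^2*(a*b))/ε ≤ s := le_max_right _ _
  have hs3 : c^2*(a+b)+c^2*(a*b) ≤ ε * s := by
    rw [div_le_iff₀ hεpos] at hs2; linarith
  nlinarith [mul_le_mul_of_nonneg_right hs3 (by linarith : (0:ℝ) ≤ s), mul_nonneg (mul_nonneg (sq_nonneg c) (mul_pos ha hb).le) (by linarith : (0:ℝ) ≤ s - 1)]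

lemma mul_sqrt_le {c s X : ℝ} (hc : 0 ≤ c) (hs : 0 ≤ s)
    (h : c^2 * X ≤ s^2) : c * Real.sqrt X ≤ s := by
  have : c * Real.sqrt X = Real.sqrt (c^2 * X) := by
    rw [Real.sqrt_mul (by positivity), Real.sqrt_sq hc]
  rw [this]
  calc Real.sqrt (c^2*X) ≤ Real.sqrt (s^2) := Real.sqrt_le_sqrt h
    _ = s := Real.sqrt_sq hs

end SF3

open SF3

/-- existence of standard form III: for `a, b > 0` and
`0 ≤ c₁, c₂ < √(ab)` there exist local squeezing parameters `r_a, r_b > 0` with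
`a(r_a − r_a⁻¹) = b(r_b − r_b⁻¹) = c₁√(r_a r_b) − c₂/√(r_a r_b)`. -/
theorem standard_form_III_exists (a b c₁ c₂ : ℝ)
    (ha : 0 < a) (hb : 0 < b) (hc₁ : 0 ≤ c₁) (hc₂ : 0 ≤ c₂)
    (h₁ : c₁ < Real.sqrt (a * b)) (h₂ : c₂ < Real.sqrt (a * b)) :
    ∃ ra rb : ℝ, 0 < ra ∧ 0 < rb ∧
      a * (ra - ra⁻¹) = b * (rb - rb⁻¹) ∧
      b * (rb - rb⁻¹) = c₁ * Real.sqrt (ra * rb) - c₂ / Real.sqrt (ra * rb) := by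
  -- the "product of g's" function and the defect function H
  set P : ℝ → ℝ := fun s => g (s/a) * g (s/b) with hP
  have hPpos : ∀ s, 0 < P s := fun s => mul_pos (g_pos _) (g_pos _)
  set H : ℝ → ℝ := fun s => c₁ * Real.sqrt (P s) - c₂ / Real.sqrt (P s) - s with hH
  have hHcont : Continuous H := by
    have hPcont : Continuous P := by
      apply Continuous.mul
      · exact g_cont.comp (continuous_id.div_const a)
      · exact g_cont.comp (continuous_id.div_const b)
    have hsq : Continuous fun s => Real.sqrt (P s) := Real.continuous_sqrt.comp hPcont
    apply Continuous.sub
    · apply Continuous.sub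
      · exact Continuous.mul continuous_const hsq
      · exact Continuous.div continuous_const hsq
          (fun s => (Real.sqrt_pos.mpr (hPpos s)).ne')
    · exact continuous_id
  -- choose endpoints
  obtain ⟨sp, hsp1, hsp2⟩ := exists_s a b c₁ ha hb hc₁ h₁
  obtain ⟨sq, hsq1, hsq2⟩ := exists_s a b c₂ ha hb hc₂ h₂
  -- H sp ≤ 0
  have hsppos : 0 < sp := lt_of_lt_of_le one_pos hsp1
  have hsqpos : 0 < sq := lt_of_lt_of_le one_pos hsq1
  have hHp : H sp ≤ 0 := by
    have hgb1 : g (sp/a) ≤ sp/a + 1 := g_le (by positivity)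
    have hgb2 : g (sp/b) ≤ sp/b + 1 := g_le (by positivity)
    have hPb : P sp ≤ (sp/a+1)*(sp/b+1) :=
      mul_le_mul hgb1 hgb2 (g_pos _).le (by positivity)
    have key : c₁ * Real.sqrt (P sp) ≤ sp := by
      have e : (sp/a+1)*(sp/b+1) = (sp+a)*(sp+b)/(a*b) := by field_simp; try ring
      have h1 : c₁^2 * P sp ≤ sp^2 := by
        have h2 : c₁^2 * ((sp+a)*(sp+b)/(a*b)) ≤ sp^2 := by
          rw [mul_div_assoc', div_le_iff₀ (by positivity)]
          nlinarith
        rw [e] at hPb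
        nlinarith [sq_nonneg c₁, (hPpos sp).le]
      exact mul_sqrt_le hc₁ hsppos.le h1
    have hdiv : 0 ≤ c₂ / Real.sqrt (P sp) := div_nonneg hc₂ (Real.sqrt_nonneg _)
    simp only [hH]
    linarith
  -- H (-sq) ≥ 0
  have hHm : 0 ≤ H (-sq) := by
    have hya : -sq/a ≤ 0 := by
      rw [neg_div]; exact neg_nonpos_of_nonneg (by positivity)
    have hyb : -sq/b ≤ 0 := by
      rw [neg_div]; exact neg_nonpos_of_nonneg (by positivity)
    have hgb1 : 1/(1 + sq/a) ≤ g (-sq/a) := by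
      have h := g_ge hya
      have e : 1 - -sq/a = 1 + sq/a := by ring
      rwa [e] at h
    have hgb2 : 1/(1 + sq/b) ≤ g (-sq/b) := by
      have h := g_ge hyb
      have e : 1 - -sq/b = 1 + sq/b := by ring
      rwa [e] at h
    set Q := (1 + sq/a)*(1 + sq/b) with hQ
    have hQpos : 0 < Q := by positivity
    have hQle : 1/Q ≤ P (-sq) := by
      have : 1/(1+sq/a) * (1/(1+sq/b)) ≤ g (-sq/a) * g (-sq/b) :=
        mul_le_mul hgb1 hgb2 (by positivity) (g_pos _).le
      calc 1/Q = 1/(1+sq/a) * (1/(1+sq/b)) := by rw [hQ]; field_simp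
        _ ≤ g (-sq/a) * g (-sq/b) := this
        _ = P (-sq) := rfl
    have hsqQpos : 0 < Real.sqrt Q := Real.sqrt_pos.mpr hQpos
    have hsqPpos : 0 < Real.sqrt (P (-sq)) := Real.sqrt_pos.mpr (hPpos _)
    have hinvle : 1/Real.sqrt Q ≤ Real.sqrt (P (-sq)) := by
      have : Real.sqrt (1/Q) ≤ Real.sqrt (P (-sq)) := Real.sqrt_le_sqrt hQle
      rwa [one_div, Real.sqrt_inv, ← one_div] at this
    have hcQ : c₂ * Real.sqrt Q ≤ sq := by
      apply mul_sqrt_le hc₂ hsqpos.le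
      have e : Q = (sq+a)*(sq+b)/(a*b) := by rw [hQ]; field_simp; try ring
      rw [e, mul_div_assoc', div_le_iff₀ (by positivity)]
      nlinarith
    have hdiv : c₂ / Real.sqrt (P (-sq)) ≤ sq := by
      rw [div_le_iff₀ hsqPpos]
      calc c₂ = c₂ * Real.sqrt Q * (1/Real.sqrt Q) := by field_simp
        _ ≤ sq * Real.sqrt (P (-sq)) :=
          mul_le_mul hcQ hinvle (by positivity) hsqpos.le
    have hmul : 0 ≤ c₁ * Real.sqrt (P (-sq)) :=
      mul_nonneg hc₁ (Real.sqrt_nonneg _)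
    simp only [hH]
    linarith
  -- intermediate value theorem
  have hle : -sq ≤ sp := by linarith
  have hsub : Set.Icc (H sp) (H (-sq)) ⊆ H '' Set.Icc (-sq) sp :=
    intermediate_value_Icc' hle hHcont.continuousOn
  obtain ⟨s, _, hs0⟩ := hsub ⟨hHp, hHm⟩
  refine ⟨g (s/a), g (s/b), g_pos _, g_pos _, ?_, ?_⟩
  · rw [g_eq, g_eq]; field_simp
  · have e2 : b * (g (s/b) - (g (s/b))⁻¹) = s := by rw [g_eq]; field_simp
    rw [e2]
    simp only [hH, hP] at hs0
    linarith
end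
end

section
/- Let a, b > 0, let c₁, c₂ ≥ 0 satisfy c₁ < √(ab) and c₂ < √(ab), and let η > 0. Then there exist r_a, r_b > 0 such that a(r_a − r_a⁻¹) = η·(c₁·√(r_a r_b) − c₂/√(r_a r_b)) = η²·b(r_b − r_b⁻¹). -/
noncomputable section

/-- Inverse of `x ↦ x - x⁻¹` on the positive reals. -/
def Fsq (u : ℝ) : ℝ := (u + Real.sqrt (u ^ 2 + 4)) / 2

lemma Fsq_pos (u : ℝ) : 0 < Fsq u := by
  have h1 : |u| < Real.sqrt (u ^ 2 + 4) := by
    have : Real.sqrt (u ^ 2) < Real.sqrt (u ^ 2 + 4) :=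
      Real.sqrt_lt_sqrt (by positivity) (by linarith)
    rwa [Real.sqrt_sq_eq_abs] at this
  have h2 : -u ≤ |u| := neg_le_abs u
  unfold Fsq
  linarith

lemma Fsq_mul (u : ℝ) : Fsq u * (Fsq u - u) = 1 := by
  have hs : Real.sqrt (u ^ 2 + 4) ^ 2 = u ^ 2 + 4 :=
    Real.sq_sqrt (by positivity)
  unfold Fsq
  linear_combination hs / 4

lemma Fsq_sub_inv (u : ℝ) : Fsq u - (Fsq u)⁻¹ = u := by
  have h := inv_eq_of_mul_eq_one_right (Fsq_mul u)
  rw [h]; ring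

lemma Fsq_le (u : ℝ) (hu : 0 ≤ u) : Fsq u ≤ u + 1 := by
  have h1 : Real.sqrt (u ^ 2 + 4) ≤ u + 2 := by
    have := Real.sqrt_le_sqrt (show u ^ 2 + 4 ≤ (u + 2) ^ 2 by nlinarith)
    rwa [Real.sqrt_sq (by linarith)] at this
  unfold Fsq
  linarith

lemma Fsq_neg (u : ℝ) : Fsq (-u) = (Fsq u)⁻¹ := by
  have hmul : Fsq (-u) * Fsq u = 1 := by
    have hs : Real.sqrt (u ^ 2 + 4) ^ 2 = u ^ 2 + 4 :=
      Real.sq_sqrt (by positivity)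
    have hneg : ((-u) ^ 2 + 4) = u ^ 2 + 4 := by ring
    unfold Fsq
    rw [hneg]
    linear_combination hs / 4
  exact eq_inv_of_mul_eq_one_left hmul

lemma Fsq_continuous : Continuous Fsq := by
  unfold Fsq
  fun_prop

/-- Endpoint estimate: for suitable large `v > 0`,
`η c √(F(v/a) F(v/(η² b))) ≤ v`, provided `c² < ab`. -/
lemma endpoint (a b η c : ℝ) (ha : 0 < a) (hb : 0 < b) (hη : 0 < η)
    (hc : 0 ≤ c) (hcab : c ^ 2 < a * b) :
    ∃ v : ℝ, 0 < v ∧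
      η * c * Real.sqrt (Fsq (v / a) * Fsq (v / (η ^ 2 * b))) ≤ v := by
  obtain ⟨v, hdv, hv1⟩ : ∃ v : ℝ, (a * b - c ^ 2) * v =
      c ^ 2 * (a + η ^ 2 * b) + c ^ 2 * a * (η ^ 2 * b) + (a * b - c ^ 2) ∧ 1 ≤ v := by
    have hdpos : (0:ℝ) < a * b - c ^ 2 := by linarith
    refine ⟨(c ^ 2 * (a + η ^ 2 * b) + c ^ 2 * a * (η ^ 2 * b) + (a * b - c ^ 2))
      / (a * b - c ^ 2), ?_, ?_⟩
    · field_simp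
    · rw [le_div_iff₀ hdpos]
      have h1 : 0 ≤ c ^ 2 * (a + η ^ 2 * b) := by positivity
      have h2 : 0 ≤ c ^ 2 * a * (η ^ 2 * b) := by positivity
      linarith
  have hdpos : (0:ℝ) < a * b - c ^ 2 := by linarith
  have hv0 : (0:ℝ) < v := by linarith
  refine ⟨v, hv0, ?_⟩
  have hηb : 0 < η ^ 2 * b := by positivity
  have hF1 : Fsq (v / a) ≤ v / a + 1 := Fsq_le _ (by positivity)
  have hF2 : Fsq (v / (η ^ 2 * b)) ≤ v / (η ^ 2 * b) + 1 := Fsq_le _ (by positivity)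
  have hF1p : 0 < Fsq (v / a) := Fsq_pos _
  have hF2p : 0 < Fsq (v / (η ^ 2 * b)) := Fsq_pos _
  have h3 : (a * b - c ^ 2) * v ^ 2 =
      (c ^ 2 * (a + η ^ 2 * b) + c ^ 2 * a * (η ^ 2 * b) + (a * b - c ^ 2)) * v := by
    linear_combination v * hdv
  have key2 : c ^ 2 * ((v + a) * (v + η ^ 2 * b)) ≤ a * b * v ^ 2 := by
    nlinarith [h3, hv1, mul_nonneg (mul_nonneg (mul_nonneg (sq_nonneg c) ha.le) hηb.le)
      (show (0:ℝ) ≤ v - 1 by linarith), mul_pos hdpos hv0]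
  -- key polynomial inequality
  have hkey : η ^ 2 * c ^ 2 * ((v / a + 1) * (v / (η ^ 2 * b) + 1)) ≤ v ^ 2 := by
    have e1 : v / a + 1 = (v + a) / a := by field_simp
    have e2 : v / (η ^ 2 * b) + 1 = (v + η ^ 2 * b) / (η ^ 2 * b) := by field_simp
    rw [e1, e2, show η ^ 2 * c ^ 2 * ((v + a) / a * ((v + η ^ 2 * b) / (η ^ 2 * b))) =
      η ^ 2 * c ^ 2 * ((v + a) * (v + η ^ 2 * b)) / (a * (η ^ 2 * b)) from by ring,
      div_le_iff₀ (by positivity)]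
    nlinarith [mul_le_mul_of_nonneg_left key2 (sq_nonneg η)]
  -- from squares to the linear inequality
  have hs2 : Real.sqrt (Fsq (v / a) * Fsq (v / (η ^ 2 * b))) ^ 2
      = Fsq (v / a) * Fsq (v / (η ^ 2 * b)) :=
    Real.sq_sqrt (by positivity)
  have hsnn : 0 ≤ Real.sqrt (Fsq (v / a) * Fsq (v / (η ^ 2 * b))) := Real.sqrt_nonneg _
  have hsq : (η * c * Real.sqrt (Fsq (v / a) * Fsq (v / (η ^ 2 * b)))) ^ 2 ≤ v ^ 2 := by
    have hFF : Fsq (v / a) * Fsq (v / (η ^ 2 * b)) ≤ (v / a + 1) * (v / (η ^ 2 * b) + 1) := by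
      have h1 : (0:ℝ) ≤ v / a + 1 := by positivity
      nlinarith
    calc (η * c * Real.sqrt (Fsq (v / a) * Fsq (v / (η ^ 2 * b)))) ^ 2
        = η ^ 2 * c ^ 2 * (Fsq (v / a) * Fsq (v / (η ^ 2 * b))) := by
          rw [mul_pow, mul_pow, hs2]
      _ ≤ η ^ 2 * c ^ 2 * ((v / a + 1) * (v / (η ^ 2 * b) + 1)) :=
          mul_le_mul_of_nonneg_left hFF (by positivity)
      _ ≤ v ^ 2 := hkey
  nlinarith [hsq, mul_nonneg (mul_nonneg hη.le hc) hsnn, hv0]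

/-- existence of the family of normal forms `V_η`: for `a, b > 0`,
`0 ≤ c₁, c₂ < √(ab)` and `η > 0` there exist local squeezing parameters
`r_a, r_b > 0` with
`a(r_a − r_a⁻¹) = η(c₁√(r_a r_b) − c₂/√(r_a r_b)) = η² b(r_b − r_b⁻¹)`. -/
theorem normal_form_eta_exists (a b c₁ c₂ η : ℝ)
    (ha : 0 < a) (hb : 0 < b) (hc₁ : 0 ≤ c₁) (hc₂ : 0 ≤ c₂)
    (h₁ : c₁ < Real.sqrt (a * b)) (h₂ : c₂ < Real.sqrt (a * b)) (hη : 0 < η) :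
    ∃ ra rb : ℝ, 0 < ra ∧ 0 < rb ∧
      a * (ra - ra⁻¹) = η * (c₁ * Real.sqrt (ra * rb) - c₂ / Real.sqrt (ra * rb)) ∧
      η * (c₁ * Real.sqrt (ra * rb) - c₂ / Real.sqrt (ra * rb)) =
        η ^ 2 * (b * (rb - rb⁻¹)) := by
  have hab : 0 < a * b := mul_pos ha hb
  have hS : Real.sqrt (a * b) ^ 2 = a * b := Real.sq_sqrt hab.le
  have hSnn : 0 ≤ Real.sqrt (a * b) := Real.sqrt_nonneg _
  have hc₁sq : c₁ ^ 2 < a * b := by nlinarith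
  have hc₂sq : c₂ ^ 2 < a * b := by nlinarith
  set s : ℝ → ℝ := fun v => Real.sqrt (Fsq (v / a) * Fsq (v / (η ^ 2 * b))) with hs_def
  have hs_pos : ∀ v, 0 < s v := fun v =>
    Real.sqrt_pos.mpr (mul_pos (Fsq_pos _) (Fsq_pos _))
  set h : ℝ → ℝ := fun v => η * (c₁ * s v - c₂ / s v) - v with hh_def
  have hs_cont : Continuous s := by
    apply Real.continuous_sqrt.comp
    exact (Fsq_continuous.comp (continuous_id.div_const a)).mul
      (Fsq_continuous.comp (continuous_id.div_const (η ^ 2 * b)))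
  have hh_cont : Continuous h := by
    apply Continuous.sub _ continuous_id
    apply Continuous.mul continuous_const
    exact ((continuous_const.mul hs_cont).sub
      (continuous_const.div hs_cont (fun v => (hs_pos v).ne')))
  -- positive endpoint
  obtain ⟨vp, hvp0, hvp⟩ := endpoint a b η c₁ ha hb hη hc₁ hc₁sq
  -- negative endpoint
  obtain ⟨w, hw0, hw⟩ := endpoint a b η c₂ ha hb hη hc₂ hc₂sq
  have hsneg : s (-w) = (s w)⁻¹ := by
    simp only [hs_def]
    rw [neg_div, neg_div, Fsq_neg, Fsq_neg, ← mul_inv, Real.sqrt_inv]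
  have h_vp : h vp ≤ 0 := by
    simp only [hh_def]
    have : 0 ≤ c₂ / s vp := div_nonneg hc₂ (hs_pos vp).le
    have hle : η * c₁ * s vp ≤ vp := hvp
    nlinarith [hη.le]
  have h_vm : 0 ≤ h (-w) := by
    simp only [hh_def, hsneg]
    have h1 : c₂ / (s w)⁻¹ = c₂ * s w := by
      field_simp
    rw [h1]
    have h2 : 0 ≤ c₁ * (s w)⁻¹ := mul_nonneg hc₁ (inv_nonneg.mpr (hs_pos w).le)
    have hle : η * c₂ * s w ≤ w := hw
    nlinarith [hη.le]
  -- IVT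
  have hle : -w ≤ vp := by linarith
  obtain ⟨v, _, hv0⟩ := intermediate_value_Icc' hle hh_cont.continuousOn
    (Set.mem_Icc.mpr ⟨h_vp, h_vm⟩)
  have hveq : η * (c₁ * s v - c₂ / s v) = v := by
    have : h v = 0 := hv0
    simp only [hh_def] at this
    linarith
  refine ⟨Fsq (v / a), Fsq (v / (η ^ 2 * b)), Fsq_pos _, Fsq_pos _, ?_, ?_⟩
  · rw [Fsq_sub_inv, mul_div_cancel₀ _ ha.ne']
    exact hveq.symm
  · rw [Fsq_sub_inv]
    rw [show η ^ 2 * (b * (v / (η ^ 2 * b))) = v by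
      field_simp]
    exact hveq

end
end

section
/- Let n₁, n₂, m₁, m₂, d₁, d₂ be real numbers and define, for r_a, r_b > 0, α(r_a, r_b) = r_a² n₁ − 2 d₁ r_a r_b + r_b² m₁ and β(r_a, r_b) = n₂ r_a⁻² − 2 d₂ (r_a r_b)⁻¹ + m₂ r_b⁻². Then the three conditions α(1,1) = β(1,1), ∂(α+β)/∂r_a (1,1) = 0 and ∂(α+β)/∂r_b (1,1) = 0 hold simultaneously if and only if n₁ − n₂ = m₁ − m₂ = d₁ − d₂. -/
noncomputable section

lemma aux_deriv (a b p q e s : ℝ) :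
    deriv (fun x : ℝ => x ^ 2 * a - 2 * b * x + e + (p * (x ^ 2)⁻¹ - 2 * q * x⁻¹ + s)) 1
      = 2 * a - 2 * b - 2 * p + 2 * q := by
  have h1 : HasDerivAt (fun x : ℝ => x ^ 2) 2 1 := by
    simpa using hasDerivAt_pow 2 (1 : ℝ)
  have hinv : HasDerivAt (fun x : ℝ => (x ^ 2)⁻¹) (-2) 1 := by
    simpa using h1.fun_inv (by norm_num)
  have hxinv : HasDerivAt (fun x : ℝ => x⁻¹) (-1) 1 := by
    simpa using hasDerivAt_inv (one_ne_zero : (1:ℝ) ≠ 0)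
  have H : HasDerivAt
      (fun x : ℝ => x ^ 2 * a - 2 * b * x + e + (p * (x ^ 2)⁻¹ - 2 * q * x⁻¹ + s))
      (2 * a - 2 * b - 2 * p + 2 * q) 1 := by
    have := ((((h1.mul_const a).sub ((hasDerivAt_id (1:ℝ)).const_mul (2 * b))).add_const e).add
      (((hinv.const_mul p).sub (hxinv.const_mul (2 * q))).add_const s))
    exact this.congr_deriv (by ring)
  exact H.deriv

/-- with `α(r_a, r_b) = r_a² n₁ − 2 d₁ r_a r_b + r_b² m₁` and
`β(r_a, r_b) = n₂ r_a⁻² − 2 d₂ (r_a r_b)⁻¹ + m₂ r_b⁻²`, the conditions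
`α(1,1) = β(1,1)`, `∂(α+β)/∂r_a(1,1) = 0`, `∂(α+β)/∂r_b(1,1) = 0` hold
simultaneously iff `n₁ − n₂ = m₁ − m₂ = d₁ − d₂` (standard form III constraints). -/
theorem identity_optimal_iff_standard_form_III (n₁ n₂ m₁ m₂ d₁ d₂ : ℝ) :
    (let α : ℝ → ℝ → ℝ := fun ra rb => ra ^ 2 * n₁ - 2 * d₁ * ra * rb + rb ^ 2 * m₁
     let β : ℝ → ℝ → ℝ := fun ra rb => n₂ * (ra ^ 2)⁻¹ - 2 * d₂ * (ra * rb)⁻¹ + m₂ * (rb ^ 2)⁻¹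
     α 1 1 = β 1 1 ∧
       deriv (fun ra => α ra 1 + β ra 1) 1 = 0 ∧
       deriv (fun rb => α 1 rb + β 1 rb) 1 = 0) ↔
    (n₁ - n₂ = m₁ - m₂ ∧ m₁ - m₂ = d₁ - d₂) := by
  have ha : deriv (fun ra : ℝ => (fun ra rb : ℝ => ra ^ 2 * n₁ - 2 * d₁ * ra * rb + rb ^ 2 * m₁) ra 1 +
      (fun ra rb : ℝ => n₂ * (ra ^ 2)⁻¹ - 2 * d₂ * (ra * rb)⁻¹ + m₂ * (rb ^ 2)⁻¹) ra 1) 1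
      = 2 * n₁ - 2 * d₁ - 2 * n₂ + 2 * d₂ := by
    have := aux_deriv n₁ d₁ n₂ d₂ (1 ^ 2 * m₁) (m₂ * ((1:ℝ) ^ 2)⁻¹)
    rw [← this]
    congr 1
    funext x
    norm_num
  have hb : deriv (fun rb : ℝ => (fun ra rb : ℝ => ra ^ 2 * n₁ - 2 * d₁ * ra * rb + rb ^ 2 * m₁) 1 rb +
      (fun ra rb : ℝ => n₂ * (ra ^ 2)⁻¹ - 2 * d₂ * (ra * rb)⁻¹ + m₂ * (rb ^ 2)⁻¹) 1 rb) 1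
      = 2 * m₁ - 2 * d₁ - 2 * m₂ + 2 * d₂ := by
    have := aux_deriv m₁ d₁ m₂ d₂ (1 ^ 2 * n₁) (n₂ * ((1:ℝ) ^ 2)⁻¹)
    rw [← this]
    congr 1
    funext x
    norm_num
    ring
  simp only []
  rw [ha, hb]
  norm_num
  constructor
  · rintro ⟨h1, h2, h3⟩
    constructor <;> linarith
  · rintro ⟨h1, h2⟩
    refine ⟨by linarith, by linarith, by linarith⟩
end
end

section
/- Let S be a real 2×2 matrix with 0 < s := det S < 1 and let G be a real 2×2 symmetric positive definite matrix with det G = (1 − s)². Then there exist T₁, T₂ ∈ Sp(2,ℝ) such that S = √s · T₂ T₁ and G = (1 − s) · T₂ T₂ᵀ. (Hence every single-mode minimal-noise trace-preserving Gaussian CP map V ↦ S V Sᵀ + G of this kind decomposes as a symplectic transformation, followed by an attenuation of transmissivity √s, followed by a second symplectic transformation.) -/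
open Matrix

noncomputable section

lemma mulJmul (T : Matrix (Fin 2) (Fin 2) ℝ) : T * J2 * Tᵀ = T.det • J2 := by
  ext i j
  fin_cases i <;> fin_cases j <;>
    simp [J2, Matrix.mul_apply, Fin.sum_univ_succ, Matrix.det_fin_two] <;> ring

lemma posdef_00 (G : Matrix (Fin 2) (Fin 2) ℝ) (h : G.PosDef) : 0 < G 0 0 := by
  have hx : (![1, 0] : Fin 2 → ℝ) ≠ 0 := by
    intro hx; have := congrFun hx 0; simp at this
  have := h.dotProduct_mulVec_pos hx
  simpa [dotProduct, mulVec, Fin.sum_univ_two] using this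

set_option maxHeartbeats 1000000 in
/-- decomposition of minimal-noise TGCP maps: if `S` is a real 2×2
matrix with `0 < det S < 1` and `G` is a real symmetric positive definite 2×2 matrix
with `det G = (1 − det S)²`, then there are symplectic `T₁, T₂ ∈ Sp(2,ℝ)` with
`S = √(det S) · T₂ T₁` and `G = (1 − det S) · T₂ T₂ᵀ`; i.e. the map
`V ↦ S V Sᵀ + G` is a symplectic transformation, followed by an attenuation of
transmissivity `√(det S)`, followed by a second symplectic transformation. -/
theorem minimal_noise_TGCP_decomposition (S G : Matrix (Fin 2) (Fin 2) ℝ)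
    (hs0 : 0 < S.det) (hs1 : S.det < 1)
    (hGsymm : G.IsSymm) (hGpd : G.PosDef) (hGdet : G.det = (1 - S.det) ^ 2) :
    ∃ T₁ T₂ : Matrix (Fin 2) (Fin 2) ℝ,
      T₁ * J2 * T₁ᵀ = J2 ∧ T₂ * J2 * T₂ᵀ = J2 ∧
      S = Real.sqrt S.det • (T₂ * T₁) ∧
      G = (1 - S.det) • (T₂ * T₂ᵀ) := by
  set s := S.det with hs
  set t := 1 - s with ht
  have ht0 : 0 < t := by linarith
  set a := G 0 0 with ha
  set b := G 0 1 with hb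
  set c := G 1 1 with hc
  have ha0 : 0 < a := posdef_00 G hGpd
  have hG10 : G 1 0 = b := by
    have := congrFun (congrFun hGsymm 1) 0
    simpa [Matrix.transpose_apply] using this.symm
  have hdet2 : a * c - b * b = t * t := by
    have := hGdet
    rw [Matrix.det_fin_two, hG10] at this
    nlinarith [this]
  set u := Real.sqrt (a * t) with hu
  have hu0 : 0 < u := Real.sqrt_pos.2 (by positivity)
  have hu2 : u * u = a * t := Real.mul_self_sqrt (by positivity)
  set T₂ : Matrix (Fin 2) (Fin 2) ℝ := !![u / t, 0; b / u, u / a] with hT₂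
  have hdT₂ : T₂.det = 1 := by
    rw [hT₂, Matrix.det_fin_two_of]
    field_simp
    nlinarith [hu2]
  have hT₂inv : T₂ * T₂⁻¹ = 1 := Matrix.mul_nonsing_inv _ (by rw [hdT₂]; norm_num)
  have hTt : T₂ᵀ = !![u / t, b / u; 0, u / a] := by
    ext i j
    fin_cases i <;> fin_cases j <;> simp [hT₂]
  have h11 : c * (u * u * (a * a)) = t * (b * b * (a * a) + u * u * (u * u)) := by
    rw [hu2]; linear_combination (a * a * t) * hdet2
  have hGeq : G = t • (T₂ * T₂ᵀ) := by
    rw [hTt, hT₂, Matrix.mul_fin_two]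
    ext i j
    fin_cases i <;> fin_cases j <;>
      simp [Matrix.smul_apply, hG10] <;> field_simp <;>
      nlinarith [hu2, hdet2, h11]
  have hss : Real.sqrt s * Real.sqrt s = s := Real.mul_self_sqrt hs0.le
  have hsqs0 : Real.sqrt s ≠ 0 := by positivity
  refine ⟨(Real.sqrt s)⁻¹ • (T₂⁻¹ * S), T₂, ?_, ?_, ?_, ?_⟩
  · rw [mulJmul]
    have : ((Real.sqrt s)⁻¹ • (T₂⁻¹ * S)).det = 1 := by
      rw [Matrix.det_smul, Matrix.det_mul, Matrix.det_nonsing_inv, hdT₂, Fintype.card_fin]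
      rw [Ring.inverse_one, one_mul, ← hs, sq, ← hss]
      field_simp
      rw [Real.sqrt_sq (Real.sqrt_nonneg _)]
    rw [this, one_smul]
  · rw [mulJmul, hdT₂, one_smul]
  · rw [Matrix.mul_smul, smul_smul, mul_inv_cancel₀ hsqs0, one_smul,
      ← Matrix.mul_assoc, hT₂inv, Matrix.one_mul]
  · exact hGeq
end
end

section
/- Let V be a physical covariance matrix of a two-mode Gaussian state, let ν, μ be real numbers, and let S ∈ Sp(4,ℝ) satisfy S (Λ V Λ) Sᵀ = diag(ν, ν, μ, μ). Writing S in 2×2 blocks S = [[W_a, W_b],[W_c, W_d]], one has |det W_b − det W_a| ≤ ν. -/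
open Matrix
open scoped ComplexOrder

noncomputable section

/-- `Z = diag(1,-1)`. -/
def Z2 : Matrix (Fin 2) (Fin 2) ℝ := !![1, 0; 0, -1]

/-- The 4×4 symplectic form `Ω = diag(J, J)`. -/
def Ω4 : Matrix (Fin 2 ⊕ Fin 2) (Fin 2 ⊕ Fin 2) ℝ := fromBlocks J2 0 0 J2

/-- `V` is a physical covariance matrix of a two-mode Gaussian state: `V + iΩ` is
positive semidefinite. -/
def IsPhysCM (V : Matrix (Fin 2 ⊕ Fin 2) (Fin 2 ⊕ Fin 2) ℝ) : Prop :=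
  (V.map Complex.ofReal + Complex.I • Ω4.map Complex.ofReal).PosSemidef

/-- Noise matrix `N(V) = Z A Z + Z C + Cᵀ Z + B` of a two-mode covariance matrix
`V = [[A, C], [Cᵀ, B]]`. -/
def noiseN (V : Matrix (Fin 2 ⊕ Fin 2) (Fin 2 ⊕ Fin 2) ℝ) : Matrix (Fin 2) (Fin 2) ℝ :=
  Z2 * V.toBlocks₁₁ * Z2 + Z2 * V.toBlocks₁₂ + (V.toBlocks₁₂)ᵀ * Z2 + V.toBlocks₂₂

/-- Coherent-state teleportation fidelity `F(V) = 2 / √(det (2 I₂ + N(V)))`. -/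
def fid (V : Matrix (Fin 2 ⊕ Fin 2) (Fin 2 ⊕ Fin 2) ℝ) : ℝ :=
  2 / Real.sqrt (((2 : ℝ) • (1 : Matrix (Fin 2) (Fin 2) ℝ) + noiseN V).det)

/-- `Σ(V) = det A + det B - 2 det C`. -/
def SigmaPT (V : Matrix (Fin 2 ⊕ Fin 2) (Fin 2 ⊕ Fin 2) ℝ) : ℝ :=
  (V.toBlocks₁₁).det + (V.toBlocks₂₂).det - 2 * (V.toBlocks₁₂).det

/-- The lowest partially-transposed symplectic eigenvalue
`ν(V) = √((Σ − √(Σ² − 4 det V))/2)`. -/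
def nuPT (V : Matrix (Fin 2 ⊕ Fin 2) (Fin 2 ⊕ Fin 2) ℝ) : ℝ :=
  Real.sqrt ((SigmaPT V - Real.sqrt ((SigmaPT V) ^ 2 - 4 * V.det)) / 2)

/-- A 2×2 real matrix satisfies `M J Mᵀ = (det M) • J`. -/
lemma mul_J2_mul_transpose (M : Matrix (Fin 2) (Fin 2) ℝ) :
    M * J2 * Mᵀ = M.det • J2 := by
  ext i j
  fin_cases i <;> fin_cases j <;>
    simp [J2, Matrix.mul_apply, Matrix.det_fin_two, Fin.sum_univ_two] <;> ring

lemma Z2_mul_J2_mul_Z2 : Z2 * J2 * Z2 = -J2 := by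
  ext i j
  fin_cases i <;> fin_cases j <;>
    simp [J2, Z2, Matrix.mul_apply, Fin.sum_univ_two]

lemma Z2_transpose : Z2ᵀ = Z2 := by
  ext i j; fin_cases i <;> fin_cases j <;> simp [Z2]

lemma map_mul_ofReal (P Q : Matrix (Fin 2 ⊕ Fin 2) (Fin 2 ⊕ Fin 2) ℝ) :
    (P * Q).map Complex.ofReal = P.map Complex.ofReal * Q.map Complex.ofReal :=
  Matrix.map_mul (f := Complex.ofRealHom)

lemma conjTranspose_map_ofReal (P : Matrix (Fin 2 ⊕ Fin 2) (Fin 2 ⊕ Fin 2) ℝ) :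
    (P.map Complex.ofReal)ᴴ = Pᵀ.map Complex.ofReal := by
  ext i j; simp [conjTranspose_apply, Complex.conj_ofReal]

/-- The partial transposition matrix `Λ = diag(1,-1,1,1)`. -/
def Λ4 : Matrix (Fin 2 ⊕ Fin 2) (Fin 2 ⊕ Fin 2) ℝ := fromBlocks Z2 0 0 1

lemma Λ4_transpose : Λ4ᵀ = Λ4 := by
  simp [Λ4, fromBlocks_transpose, Z2_transpose]

/-- if `V` is a physical two-mode covariance matrix and
`S ∈ Sp(4,ℝ)` diagonalizes the partially transposed matrix,
`S (Λ V Λ) Sᵀ = diag(ν, ν, μ, μ)`, then the blocks `W_a = S₁₁`, `W_b = S₁₂`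
satisfy the Heisenberg constraint `|det W_b − det W_a| ≤ ν`. -/
theorem heisenberg_epsilon_bound
    (V : Matrix (Fin 2 ⊕ Fin 2) (Fin 2 ⊕ Fin 2) ℝ) (hV : IsPhysCM V)
    (ν μ : ℝ) (S : Matrix (Fin 2 ⊕ Fin 2) (Fin 2 ⊕ Fin 2) ℝ)
    (hS : S * Ω4 * Sᵀ = Ω4)
    (hdiag : S * (Λ4 * V * Λ4) * Sᵀ =
      fromBlocks (ν • (1 : Matrix (Fin 2) (Fin 2) ℝ)) 0 0
        (μ • (1 : Matrix (Fin 2) (Fin 2) ℝ))) :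
    |(S.toBlocks₁₂).det - (S.toBlocks₁₁).det| ≤ ν := by
  classical
  set ε : ℝ := (S.toBlocks₁₂).det - (S.toBlocks₁₁).det with hε
  -- The real matrices A = S Λ V Λ Sᵀ and K = S Λ Ω Λ Sᵀ
  set A : Matrix (Fin 2 ⊕ Fin 2) (Fin 2 ⊕ Fin 2) ℝ := S * (Λ4 * V * Λ4) * Sᵀ with hA
  set K : Matrix (Fin 2 ⊕ Fin 2) (Fin 2 ⊕ Fin 2) ℝ := S * (Λ4 * Ω4 * Λ4) * Sᵀ with hK
  -- entries of A on the first block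
  have hAe : ∀ i j, A (Sum.inl i) (Sum.inl j) = ν * (1 : Matrix (Fin 2) (Fin 2) ℝ) i j := by
    intro i j
    rw [hdiag]
    simp [fromBlocks_apply₁₁, Matrix.smul_apply]
  -- Λ Ω Λ = diag(-J, J)
  have hLOL : Λ4 * Ω4 * Λ4 = fromBlocks (-J2) 0 0 J2 := by
    rw [Λ4, Ω4, fromBlocks_multiply, fromBlocks_multiply]
    simp [Z2_mul_J2_mul_Z2]
  -- top-left block of K is ε • J₂
  have hKblock : K.toBlocks₁₁ = ε • J2 := by
    have hSdec : S = fromBlocks S.toBlocks₁₁ S.toBlocks₁₂ S.toBlocks₂₁ S.toBlocks₂₂ :=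
      (fromBlocks_toBlocks S).symm
    have : K = fromBlocks S.toBlocks₁₁ S.toBlocks₁₂ S.toBlocks₂₁ S.toBlocks₂₂ *
        fromBlocks (-J2) 0 0 J2 *
        (fromBlocks S.toBlocks₁₁ S.toBlocks₁₂ S.toBlocks₂₁ S.toBlocks₂₂)ᵀ := by
      rw [hK, hLOL, ← hSdec]
    rw [this, fromBlocks_transpose, fromBlocks_multiply, fromBlocks_multiply]
    simp only [toBlocks_fromBlocks₁₁, Matrix.mul_zero, Matrix.zero_mul, add_zero, zero_add,
      Matrix.neg_mul, Matrix.mul_neg]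
    rw [Matrix.mul_assoc, Matrix.mul_assoc, ← Matrix.mul_assoc _ J2 _, ← Matrix.mul_assoc _ J2 _,
      mul_J2_mul_transpose, mul_J2_mul_transpose, hε, sub_smul]
    abel
  have hKe : ∀ i j, K (Sum.inl i) (Sum.inl j) = (ε • J2) i j := by
    intro i j
    have := congrFun (congrFun hKblock i) j
    simpa [toBlocks₁₁] using this
  -- complexify
  set T : Matrix (Fin 2 ⊕ Fin 2) (Fin 2 ⊕ Fin 2) ℝ := S * Λ4 with hT
  set Tc := T.map Complex.ofReal with hTc
  have hQ : (Tc * (V.map Complex.ofReal + Complex.I • Ω4.map Complex.ofReal) * Tcᴴ).PosSemidef :=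
    hV.mul_mul_conjTranspose_same Tc
  have hQeq : Tc * (V.map Complex.ofReal + Complex.I • Ω4.map Complex.ofReal) * Tcᴴ =
      A.map Complex.ofReal + Complex.I • K.map Complex.ofReal := by
    rw [hTc, conjTranspose_map_ofReal]
    rw [Matrix.mul_add, Matrix.add_mul, Matrix.mul_smul, Matrix.smul_mul]
    rw [← map_mul_ofReal, ← map_mul_ofReal, ← map_mul_ofReal, ← map_mul_ofReal]
    congr 2
    · rw [hA, hT]
      rw [Matrix.transpose_mul, Λ4_transpose]
      noncomm_ring
    · rw [hK, hT]
      rw [Matrix.transpose_mul, Λ4_transpose]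
      noncomm_ring
  rw [hQeq] at hQ
  -- test vectors
  have key : ∀ c : ℂ, (0 : ℂ) ≤ (ν : ℂ) + c * (Complex.I * (ε : ℂ)) +
      (starRingEnd ℂ) c * (-(Complex.I * (ε : ℂ)) + c * (ν : ℂ)) := by
    intro c
    have h := hQ.dotProduct_mulVec_nonneg (Sum.elim ![1, c] 0)
    simpa [dotProduct, mulVec, Fintype.sum_sum_type, Fin.sum_univ_two, hAe, hKe,
      Matrix.one_apply, J2, Matrix.smul_apply, mul_comm, mul_left_comm,
      mul_assoc] using h
  have h1 : (0 : ℝ) ≤ 2 * ν - 2 * ε := by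
    have h := key Complex.I
    rw [Complex.conj_I] at h
    have heq : (ν : ℂ) + Complex.I * (Complex.I * (ε : ℂ)) +
        (-Complex.I) * (-(Complex.I * (ε : ℂ)) + Complex.I * (ν : ℂ)) =
        ((2 * ν - 2 * ε : ℝ) : ℂ) := by
      push_cast
      linear_combination (2 * (ε : ℂ) - (ν : ℂ)) * Complex.I_mul_I
    rw [heq] at h
    exact Complex.zero_le_real.mp h
  have h2 : (0 : ℝ) ≤ 2 * ν + 2 * ε := by
    have h := key (-Complex.I)
    rw [map_neg, Complex.conj_I, neg_neg] at h
    have heq : (ν : ℂ) + (-Complex.I) * (Complex.I * (ε : ℂ)) +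
        Complex.I * (-(Complex.I * (ε : ℂ)) + (-Complex.I) * (ν : ℂ)) =
        ((2 * ν + 2 * ε : ℝ) : ℂ) := by
      push_cast
      linear_combination (-(2 * (ε : ℂ) + (ν : ℂ))) * Complex.I_mul_I
    rw [heq] at h
    exact Complex.zero_le_real.mp h
  rw [abs_le]
  constructor <;> [linarith; linarith]
end
end

section
/- Let V be any 4×4 real symmetric matrix written in 2×2 blocks V = [[A, C],[Cᵀ, B]]. Then the characteristic polynomial of the 4×4 matrix Ω (Λ V Λ) equals x⁴ + (det A + det B − 2 det C)·x² + det V. -/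
open Matrix Polynomial
noncomputable section
lemma det_fin_four4 {R : Type*} [CommRing R] (A : Matrix (Fin 4) (Fin 4) R) :
    A.det =
      A 0 0 * (A 1 1 * A 2 2 * A 3 3 - A 1 1 * A 2 3 * A 3 2 - A 1 2 * A 2 1 * A 3 3
        + A 1 2 * A 2 3 * A 3 1 + A 1 3 * A 2 1 * A 3 2 - A 1 3 * A 2 2 * A 3 1)
      - A 0 1 * (A 1 0 * A 2 2 * A 3 3 - A 1 0 * A 2 3 * A 3 2 - A 1 2 * A 2 0 * A 3 3
        + A 1 2 * A 2 3 * A 3 0 + A 1 3 * A 2 0 * A 3 2 - A 1 3 * A 2 2 * A 3 0)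
      + A 0 2 * (A 1 0 * A 2 1 * A 3 3 - A 1 0 * A 2 3 * A 3 1 - A 1 1 * A 2 0 * A 3 3
        + A 1 1 * A 2 3 * A 3 0 + A 1 3 * A 2 0 * A 3 1 - A 1 3 * A 2 1 * A 3 0)
      - A 0 3 * (A 1 0 * A 2 1 * A 3 2 - A 1 0 * A 2 2 * A 3 1 - A 1 1 * A 2 0 * A 3 2
        + A 1 1 * A 2 2 * A 3 0 + A 1 2 * A 2 0 * A 3 1 - A 1 2 * A 2 1 * A 3 0) := by
  rw [Matrix.det_succ_row_zero]
  simp [Fin.sum_univ_succ, Matrix.det_fin_three, Matrix.submatrix_apply, Fin.succAbove,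
    Fin.ext_iff, show (Fin.succ 2 : Fin 4) = 3 from rfl,
    show ((2 : Fin 3).castSucc : Fin 4) = 2 from rfl]
  ring

set_option maxHeartbeats 2000000 in
/-- for any real symmetric 4×4 matrix `V = [[A,C],[Cᵀ,B]]`, the
characteristic polynomial of `Ω (Λ V Λ)` is `x⁴ + (det A + det B − 2 det C) x² + det V`. -/
theorem charpoly_omega_PT (A B Cm : Matrix (Fin 2) (Fin 2) ℝ)
    (hA : Aᵀ = A) (hB : Bᵀ = B) :
    (Ω4 * (Λ4 * fromBlocks A Cm Cmᵀ B * Λ4)).charpoly =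
      X ^ 4 + Polynomial.C (A.det + B.det - 2 * Cm.det) * X ^ 2 +
        Polynomial.C (fromBlocks A Cm Cmᵀ B).det := by
  have hA01 : A 1 0 = A 0 1 := by conv_lhs => rw [← hA, Matrix.transpose_apply]
  have hB01 : B 1 0 = B 0 1 := by conv_lhs => rw [← hB, Matrix.transpose_apply]
  rw [← Matrix.charpoly_reindex finSumFinEquiv]
  have hM : (Matrix.reindex finSumFinEquiv finSumFinEquiv)
      (Ω4 * (Λ4 * fromBlocks A Cm Cmᵀ B * Λ4)) =
      !![-(A 0 1), A 1 1, -(Cm 1 0), -(Cm 1 1);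
         -(A 0 0), A 0 1, -(Cm 0 0), -(Cm 0 1);
         Cm 0 1, -(Cm 1 1), B 0 1, B 1 1;
         -(Cm 0 0), Cm 1 0, -(B 0 0), -(B 0 1)] := by
    ext i j
    fin_cases i <;> fin_cases j <;>
      simp [Ω4, Λ4, J2, Z2, Matrix.mul_apply, Fintype.sum_sum_type, Fin.sum_univ_succ,
        Matrix.fromBlocks_apply₁₁, Matrix.fromBlocks_apply₁₂, Matrix.fromBlocks_apply₂₁,
        Matrix.fromBlocks_apply₂₂, Matrix.one_apply, hA01, hB01,
        show (finSumFinEquiv (m := 2) (n := 2)).symm 0 = Sum.inl 0 by decide,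
        show (finSumFinEquiv (m := 2) (n := 2)).symm 1 = Sum.inl 1 by decide,
        show (finSumFinEquiv (m := 2) (n := 2)).symm 2 = Sum.inr 0 by decide,
        show (finSumFinEquiv (m := 2) (n := 2)).symm 3 = Sum.inr 1 by decide]
  rw [hM]
  have hdet : (fromBlocks A Cm Cmᵀ B).det =
      Matrix.det !![A 0 0, A 0 1, Cm 0 0, Cm 0 1;
         A 0 1, A 1 1, Cm 1 0, Cm 1 1;
         Cm 0 0, Cm 1 0, B 0 0, B 0 1;
         Cm 0 1, Cm 1 1, B 0 1, B 1 1] := by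
    rw [← Matrix.det_reindex_self finSumFinEquiv (fromBlocks A Cm Cmᵀ B)]
    congr 1
    ext i j
    fin_cases i <;> fin_cases j <;>
      simp [Matrix.fromBlocks_apply₁₁, Matrix.fromBlocks_apply₁₂, Matrix.fromBlocks_apply₂₁,
        Matrix.fromBlocks_apply₂₂, hA01, hB01,
        show (finSumFinEquiv (m := 2) (n := 2)).symm 0 = Sum.inl 0 by decide,
        show (finSumFinEquiv (m := 2) (n := 2)).symm 1 = Sum.inl 1 by decide,
        show (finSumFinEquiv (m := 2) (n := 2)).symm 2 = Sum.inr 0 by decide,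
        show (finSumFinEquiv (m := 2) (n := 2)).symm 3 = Sum.inr 1 by decide]
  rw [hdet, Matrix.charpoly, det_fin_four4, det_fin_four4, Matrix.det_fin_two A,
    Matrix.det_fin_two B, Matrix.det_fin_two Cm, hA01, hB01]
  simp [charmatrix_apply, Matrix.one_apply, map_sub, map_add, _root_.map_mul, map_ofNat]
  ring
end
end

section
/- Let ω, γ, κ > 0 and G, Δ ∈ ℝ, and let A be the real 4×4 matrix [[0, ω, 0, 0],[−ω, −γ, G, 0],[0, 0, −κ, Δ],[G, 0, −Δ, −κ]]. Define s₁ = 2γκ·([κ² + (ω − Δ)²]·[κ² + (ω + Δ)²] + γ·[(γ + 2κ)(κ² + Δ²) + 2κω²]) + Δ·ω·G²·(γ + 2κ)² and s₂ = ω(κ² + Δ²) − G²Δ. Then every eigenvalue of A (over ℂ) has strictly negative real part if and only if s₁ > 0 and s₂ > 0. -/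
open Matrix

noncomputable section

section RouthHurwitzAux

open Polynomial

/-- helper: a complex number written as `u + v*I` with `u v` real is zero iff both parts are. -/
private lemma re_im_eq_zero {u v : ℝ} (h : (u:ℂ) + v*Complex.I = 0) : u = 0 ∧ v = 0 := by
  constructor
  · simpa using congrArg Complex.re h
  · simpa using congrArg Complex.im h

private lemma real_lin_zero {u v : ℝ} {z : ℂ} (hz : z.im ≠ 0) (h : (u:ℂ)*z + v = 0) :
    u = 0 ∧ v = 0 := by
  have him : u * z.im = 0 := by simpa using congrArg Complex.im h
  have hu : u = 0 := by
    rcases mul_eq_zero.mp him with h' | h'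
    · exact h'
    · exact absurd h' hz
  refine ⟨hu, ?_⟩
  have : (v:ℂ) = 0 := by simpa [hu] using h
  exact_mod_cast this

private lemma quartic_root (a b c d : ℝ) :
    ∃ z : ℂ, z^4 + a*z^3 + b*z^2 + c*z + d = 0 := by
  obtain ⟨z, hz⟩ := Complex.exists_root (f := X^4 + C (a:ℂ)*X^3 + C (b:ℂ)*X^2 + C (c:ℂ)*X + C (d:ℂ))
    (by have : (X^4 + C (a:ℂ)*X^3 + C (b:ℂ)*X^2 + C (c:ℂ)*X + C (d:ℂ)).degree = 4 := by
          compute_degree!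
        rw [this]; norm_num)
  refine ⟨z, ?_⟩
  have := hz
  simpa [Polynomial.IsRoot] using this

private lemma cubic_root (e f g : ℝ) :
    ∃ z : ℂ, z^3 + e*z^2 + f*z + g = 0 := by
  obtain ⟨z, hz⟩ := Complex.exists_root (f := X^3 + C (e:ℂ)*X^2 + C (f:ℂ)*X + C (g:ℂ))
    (by have : (X^3 + C (e:ℂ)*X^2 + C (f:ℂ)*X + C (g:ℂ)).degree = 3 := by
          compute_degree!
        rw [this]; norm_num)
  refine ⟨z, ?_⟩
  simpa [Polynomial.IsRoot] using hz

/-- quadratic with a genuinely complex root divides a quartic with that root. -/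
private lemma factor_pair (a b c d : ℝ) (z : ℂ) (him : z.im ≠ 0)
    (hz : z^4 + a*z^3 + b*z^2 + c*z + d = 0) :
    ∃ p₁ q₁ p₂ q₂ : ℝ, a = p₁+p₂ ∧ b = q₁+q₂+p₁*p₂ ∧ c = p₁*q₂+p₂*q₁ ∧ d = q₁*q₂ := by
  set x := z.re with hx
  set y := z.im with hy
  have hzxy : z = (x:ℂ) + y*Complex.I := (Complex.re_add_im z).symm
  have hquad : z^2 + (-2*(x:ℂ))*z + ((x:ℂ)^2+(y:ℂ)^2) = 0 := by
    rw [hzxy]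
    linear_combination (y:ℂ)^2 * Complex.I_sq
  have hlin : ((c - (-2*x)*(b - (x^2+y^2) - (-2*x)*(a-(-2*x))) - (x^2+y^2)*(a-(-2*x)) : ℝ):ℂ)*z
      + ((d - (x^2+y^2)*(b - (x^2+y^2) - (-2*x)*(a-(-2*x))) : ℝ):ℂ) = 0 := by
    push_cast
    linear_combination hz - (z^2 + ((a:ℂ)-(-2*x))*z + ((b:ℂ) - (x^2+y^2) - (-2*x)*(a-(-2*x))))*hquad
  obtain ⟨hu, hv⟩ := real_lin_zero him hlin
  refine ⟨-2*x, x^2+y^2, a-(-2*x), b - (x^2+y^2) - (-2*x)*(a-(-2*x)), by ring, by ring, ?_, ?_⟩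
  · linarith [hu]
  · linarith [hv]

/-- quadratic with complex root divides a cubic with that root. -/
private lemma factor_lin (e f g : ℝ) (z : ℂ) (him : z.im ≠ 0)
    (hz : z^3 + e*z^2 + f*z + g = 0) :
    ∃ s t m : ℝ, e = s+m ∧ f = t+s*m ∧ g = t*m := by
  set x := z.re with hx
  set y := z.im with hy
  have hzxy : z = (x:ℂ) + y*Complex.I := (Complex.re_add_im z).symm
  have hquad : z^2 + (-2*(x:ℂ))*z + ((x:ℂ)^2+(y:ℂ)^2) = 0 := by
    rw [hzxy]
    linear_combination (y:ℂ)^2 * Complex.I_sq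
  have hlin : ((f - (x^2+y^2) - (-2*x)*(e-(-2*x)) : ℝ):ℂ)*z
      + ((g - (x^2+y^2)*(e-(-2*x)) : ℝ):ℂ) = 0 := by
    push_cast
    linear_combination hz - (z + ((e:ℂ)-(-2*x)))*hquad
  obtain ⟨hu, hv⟩ := real_lin_zero him hlin
  exact ⟨-2*x, x^2+y^2, e-(-2*x), by ring, by linarith [hu], by linarith [hv]⟩

/-- every monic real quartic splits into two monic real quadratics (coefficient form). -/
private lemma exists_quad_factor (a b c d : ℝ) :
    ∃ p₁ q₁ p₂ q₂ : ℝ, a = p₁+p₂ ∧ b = q₁+q₂+p₁*p₂ ∧ c = p₁*q₂+p₂*q₁ ∧ d = q₁*q₂ := by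
  obtain ⟨z₁, hz₁⟩ := quartic_root a b c d
  rcases eq_or_ne z₁.im 0 with him | him
  swap
  · exact factor_pair a b c d z₁ him hz₁
  · -- z₁ is real
    set r := z₁.re with hrdef
    have hz₁' : z₁ = (r:ℂ) := by
      rw [← Complex.re_add_im z₁, him]; simp [hrdef]
    rw [hz₁'] at hz₁
    have hr : r^4 + a*r^3 + b*r^2 + c*r + d = 0 := by exact_mod_cast hz₁
    obtain ⟨z₂, hz₂⟩ := cubic_root (a+r) (b+(a+r)*r) (c+(b+(a+r)*r)*r)
    rcases eq_or_ne z₂.im 0 with him2 | him2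
    · -- second real root
      set r₂ := z₂.re with hr2def
      have hz₂' : z₂ = (r₂:ℂ) := by
        rw [← Complex.re_add_im z₂, him2]; simp [hr2def]
      rw [hz₂'] at hz₂
      have hr₂ : r₂^3 + (a+r)*r₂^2 + (b+(a+r)*r)*r₂ + (c+(b+(a+r)*r)*r) = 0 := by
        exact_mod_cast hz₂
      refine ⟨-(r+r₂), r*r₂, (a+r)+r₂, (b+(a+r)*r) + ((a+r)+r₂)*r₂, by ring, by ring, ?_, ?_⟩
      · linear_combination hr₂
      · linear_combination hr - r*hr₂
    · obtain ⟨s, t, m, he, hf, hg⟩ := factor_lin (a+r) (b+(a+r)*r) (c+(b+(a+r)*r)*r) z₂ him2 hz₂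
      refine ⟨s, t, m - r, -(r*m), ?_, ?_, ?_, ?_⟩
      · linear_combination he
      · linear_combination hf - r*he
      · linear_combination hg - r*hf
      · linear_combination hr - r*hg

/-- Routh–Hurwitz for a monic real quadratic. -/
private lemma quad_stable (p q : ℝ) :
    (∀ z : ℂ, z^2 + p*z + q = 0 → z.re < 0) ↔ (0 < p ∧ 0 < q) := by
  constructor
  · intro h
    have hq : 0 < q := by
      by_contra hq
      push_neg at hq
      set s := Real.sqrt (p^2 - 4*q) with hs
      have hs2 : s^2 = p^2 - 4*q := Real.sq_sqrt (by nlinarith)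
      have hs0 : 0 ≤ s := Real.sqrt_nonneg _
      have hroot : (((s - p)/2 : ℝ):ℂ)^2 + p*(((s-p)/2 : ℝ):ℂ) + q = 0 := by
        have : ((s-p)/2)^2 + p*((s-p)/2) + q = 0 := by linear_combination hs2/4
        exact_mod_cast congrArg (Complex.ofReal) this
      have hre := h _ hroot
      simp only [Complex.ofReal_re] at hre
      have h1 : s < p := by linarith
      have h2 : s^2 < p^2 := by nlinarith
      nlinarith
    refine ⟨?_, hq⟩
    by_contra hp
    push_neg at hp
    rcases le_or_gt (p^2 - 4*q) 0 with hdisc | hdisc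
    · set S := Real.sqrt (4*q - p^2) with hS
      have hS2 : S^2 = 4*q - p^2 := Real.sq_sqrt (by linarith)
      have hS2' : ((S:ℝ):ℂ)^2 = 4*(q:ℂ) - (p:ℂ)^2 := by exact_mod_cast hS2
      have hroot : (((-p/2 : ℝ)):ℂ) + ((S/2 : ℝ):ℂ)*Complex.I = 0 → True := fun _ => trivial
      have hz : ((((-p/2 : ℝ)):ℂ) + ((S/2 : ℝ):ℂ)*Complex.I)^2
          + p*((((-p/2 : ℝ)):ℂ) + ((S/2 : ℝ):ℂ)*Complex.I) + q = 0 := by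
        push_cast
        linear_combination (-(1:ℂ)/4) * hS2' + ((S:ℂ)^2/4) * Complex.I_sq
      have hre := h _ hz
      simp only [Complex.add_re, Complex.ofReal_re, Complex.mul_re, Complex.I_re, Complex.I_im,
        Complex.ofReal_im, mul_zero, mul_one, zero_sub, sub_zero, zero_mul] at hre
      nlinarith
    · set s := Real.sqrt (p^2 - 4*q) with hs
      have hs2 : s^2 = p^2 - 4*q := Real.sq_sqrt (by linarith)
      have hs0 : 0 ≤ s := Real.sqrt_nonneg _
      have hroot : (((s - p)/2 : ℝ):ℂ)^2 + p*(((s-p)/2 : ℝ):ℂ) + q = 0 := by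
        have : ((s-p)/2)^2 + p*((s-p)/2) + q = 0 := by linear_combination hs2/4
        exact_mod_cast congrArg (Complex.ofReal) this
      have hre := h _ hroot
      simp only [Complex.ofReal_re] at hre
      linarith
  · rintro ⟨hp, hq⟩ z hz
    set x := z.re with hx
    set y := z.im with hy
    have hzxy : z = (x:ℂ) + y*Complex.I := (Complex.re_add_im z).symm
    rw [hzxy] at hz
    have key : ((x^2 - y^2 + p*x + q : ℝ):ℂ) + ((2*x*y + p*y : ℝ):ℂ)*Complex.I = 0 := by
      push_cast
      linear_combination hz - (y:ℂ)^2 * Complex.I_sq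
    obtain ⟨h1, h2⟩ := re_im_eq_zero key
    rcases eq_or_ne y 0 with hy0 | hy0
    · rw [hy0] at h1
      by_contra hx0
      push_neg at hx0
      nlinarith
    · have h3 : y*(2*x + p) = 0 := by linear_combination h2
      rcases mul_eq_zero.mp h3 with h' | h'
      · exact absurd h' hy0
      · linarith

/-- Routh–Hurwitz for a monic real quartic (given the two automatic positivity conditions). -/
private lemma RH4 (a b c d : ℝ) (ha : 0 < a) (hc : 0 < c) :
    (∀ z : ℂ, z^4 + a*z^3 + b*z^2 + c*z + d = 0 → z.re < 0) ↔
      (0 < d ∧ 0 < c*(a*b-c) - a^2*d) := by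
  obtain ⟨p₁, q₁, p₂, q₂, h₁, h₂, h₃, h₄⟩ := exists_quad_factor a b c d
  have hfac : ∀ z : ℂ, z^4 + (a:ℂ)*z^3 + b*z^2 + c*z + d
      = (z^2 + (p₁:ℂ)*z + q₁)*(z^2 + (p₂:ℂ)*z + q₂) := by
    intro z
    have e₁ : (a:ℂ) = (p₁:ℂ) + p₂ := by exact_mod_cast h₁
    have e₂ : (b:ℂ) = (q₁:ℂ) + q₂ + p₁*p₂ := by exact_mod_cast h₂
    have e₃ : (c:ℂ) = (p₁:ℂ)*q₂ + p₂*q₁ := by exact_mod_cast h₃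
    have e₄ : (d:ℂ) = (q₁:ℂ)*q₂ := by exact_mod_cast h₄
    rw [e₁, e₂, e₃, e₄]; ring
  have hsplit : (∀ z : ℂ, z^4 + a*z^3 + b*z^2 + c*z + d = 0 → z.re < 0) ↔
      ((∀ z : ℂ, z^2 + (p₁:ℂ)*z + q₁ = 0 → z.re < 0) ∧
       (∀ z : ℂ, z^2 + (p₂:ℂ)*z + q₂ = 0 → z.re < 0)) := by
    constructor
    · intro h
      constructor
      · intro z hzq
        exact h z (by rw [hfac, hzq, zero_mul])
      · intro z hzq
        exact h z (by rw [hfac, hzq, mul_zero])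
    · rintro ⟨hA, hB⟩ z hz
      rw [hfac] at hz
      rcases mul_eq_zero.mp hz with h' | h'
      · exact hA z h'
      · exact hB z h'
  rw [hsplit, quad_stable, quad_stable]
  have hid : c*(a*b-c) - a^2*d = p₁*p₂*((q₁-q₂)^2 + (p₁+p₂)*(p₁*q₂+p₂*q₁)) := by
    rw [h₁, h₂, h₃, h₄]; ring
  constructor
  · rintro ⟨⟨hp₁, hq₁⟩, ⟨hp₂, hq₂⟩⟩
    constructor
    · rw [h₄]; positivity
    · rw [hid]
      have hbk : 0 < (q₁-q₂)^2 + (p₁+p₂)*(p₁*q₂+p₂*q₁) := by positivity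
      positivity
  · rintro ⟨hd, hD3⟩
    have hK : 0 < (q₁-q₂)^2 + (p₁+p₂)*(p₁*q₂+p₂*q₁) := by
      have : (q₁-q₂)^2 + (p₁+p₂)*(p₁*q₂+p₂*q₁) = (q₁-q₂)^2 + a*c := by rw [h₁, h₃]
      rw [this]; positivity
    have hpp : 0 < p₁*p₂ := by
      rw [hid] at hD3
      by_contra hpp
      push_neg at hpp
      nlinarith
    have hp₁ : 0 < p₁ := by nlinarith
    have hp₂ : 0 < p₂ := by nlinarith
    have hqq : 0 < q₁*q₂ := h₄ ▸ hd
    have hq₁ : 0 < q₁ := by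
      by_contra hq₁
      push_neg at hq₁
      have hq₂ : q₂ < 0 := by nlinarith
      nlinarith [h₃]
    have hq₂ : 0 < q₂ := by nlinarith
    exact ⟨⟨hp₁, hq₁⟩, hp₂, hq₂⟩

end RouthHurwitzAux

/-- Drift matrix of the linearized optomechanical quantum Langevin equations in the
quadrature basis `(δq, δp, δX, δY)`. -/
def driftA (ω γ κ G Δ : ℝ) : Matrix (Fin 4) (Fin 4) ℝ :=
  !![0, ω, 0, 0;
     -ω, -γ, G, 0;
     0, 0, -κ, Δ;
     G, 0, -Δ, -κ]

/-- Routh–Hurwitz stability conditions: every complex eigenvalue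
of the drift matrix has strictly negative real part iff `s₁ > 0` and `s₂ > 0`. -/
theorem routh_hurwitz_optomech (ω γ κ G Δ : ℝ)
    (hω : 0 < ω) (hγ : 0 < γ) (hκ : 0 < κ) :
    (∀ z ∈ spectrum ℂ ((driftA ω γ κ G Δ).map Complex.ofReal), z.re < 0) ↔
      (0 < 2 * γ * κ * ((κ ^ 2 + (ω - Δ) ^ 2) * (κ ^ 2 + (ω + Δ) ^ 2) +
            γ * ((γ + 2 * κ) * (κ ^ 2 + Δ ^ 2) + 2 * κ * ω ^ 2)) +
          Δ * ω * G ^ 2 * (γ + 2 * κ) ^ 2 ∧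
        0 < ω * (κ ^ 2 + Δ ^ 2) - G ^ 2 * Δ) := by
  have hmem : ∀ z : ℂ, z ∈ spectrum ℂ ((driftA ω γ κ G Δ).map Complex.ofReal) ↔
      z^4 + ((γ+2*κ : ℝ):ℂ)*z^3 + ((ω^2+κ^2+Δ^2+2*γ*κ : ℝ):ℂ)*z^2
        + ((γ*(κ^2+Δ^2)+2*κ*ω^2 : ℝ):ℂ)*z + ((ω^2*(κ^2+Δ^2) - ω*G^2*Δ : ℝ):ℂ) = 0 := by
    intro z
    rw [spectrum.mem_iff, Matrix.isUnit_iff_isUnit_det, isUnit_iff_ne_zero,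
      ne_eq, not_not, Algebra.algebraMap_eq_smul_one]
    have h : (z • (1 : Matrix (Fin 4) (Fin 4) ℂ) - (driftA ω γ κ G Δ).map Complex.ofReal)
        = !![z, -ω, 0, 0; (ω:ℂ), z+γ, -G, 0; 0, 0, z+κ, -Δ; -G, 0, Δ, z+κ] := by
      ext i j
      fin_cases i <;> fin_cases j <;>
        simp [driftA, Matrix.one_apply, Matrix.map_apply, Matrix.vecHead, Matrix.vecTail]
    rw [h]
    have h2 : (!![z, -ω, 0, 0; (ω:ℂ), z+γ, -G, 0; 0, 0, z+κ, -Δ; -G, 0, Δ, z+κ]).det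
        = z^4 + ((γ+2*κ : ℝ):ℂ)*z^3 + ((ω^2+κ^2+Δ^2+2*γ*κ : ℝ):ℂ)*z^2
          + ((γ*(κ^2+Δ^2)+2*κ*ω^2 : ℝ):ℂ)*z + ((ω^2*(κ^2+Δ^2) - ω*G^2*Δ : ℝ):ℂ) := by
      simp [Matrix.det_succ_row_zero, Fin.sum_univ_succ, Fin.succAbove,
        Matrix.submatrix_apply, Matrix.vecHead, Matrix.vecTail]
      ring
    rw [h2]
  have step1 : (∀ z ∈ spectrum ℂ ((driftA ω γ κ G Δ).map Complex.ofReal), z.re < 0) ↔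
      (∀ z : ℂ, z^4 + ((γ+2*κ : ℝ):ℂ)*z^3 + ((ω^2+κ^2+Δ^2+2*γ*κ : ℝ):ℂ)*z^2
        + ((γ*(κ^2+Δ^2)+2*κ*ω^2 : ℝ):ℂ)*z + ((ω^2*(κ^2+Δ^2) - ω*G^2*Δ : ℝ):ℂ) = 0 → z.re < 0) :=
    forall_congr' fun z => imp_congr (hmem z) Iff.rfl
  rw [step1, RH4 (γ+2*κ) (ω^2+κ^2+Δ^2+2*γ*κ) (γ*(κ^2+Δ^2)+2*κ*ω^2) (ω^2*(κ^2+Δ^2) - ω*G^2*Δ)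
    (by linarith) (by positivity)]
  have hD : (γ*(κ^2+Δ^2)+2*κ*ω^2) * ((γ+2*κ)*(ω^2+κ^2+Δ^2+2*γ*κ) - (γ*(κ^2+Δ^2)+2*κ*ω^2))
      - (γ+2*κ)^2*(ω^2*(κ^2+Δ^2) - ω*G^2*Δ)
      = 2 * γ * κ * ((κ ^ 2 + (ω - Δ) ^ 2) * (κ ^ 2 + (ω + Δ) ^ 2) +
            γ * ((γ + 2 * κ) * (κ ^ 2 + Δ ^ 2) + 2 * κ * ω ^ 2)) +
          Δ * ω * G ^ 2 * (γ + 2 * κ) ^ 2 := by ring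
  have hd : ω^2*(κ^2+Δ^2) - ω*G^2*Δ = ω*(ω*(κ^2+Δ^2) - G^2*Δ) := by ring
  constructor
  · rintro ⟨h1, h2⟩
    refine ⟨by linarith, ?_⟩
    rw [hd] at h1
    nlinarith
  · rintro ⟨h1, h2⟩
    refine ⟨by rw [hd]; exact mul_pos hω h2, by linarith⟩
end
end

section
/- Let κ > 0, ω > 0, γ ∈ ℝ, G_A > 0, G_B > 0, and Δ_A, Δ_B ∈ ℝ with (Δ_A, Δ_B) ≠ (0, 0). Let A(G_A, G_B) be the real 6×6 matrix [[0, ω, 0, 0, 0, 0],[−ω, −γ, G_A, 0, G_B, 0],[0, 0, −κ, Δ_A, 0, 0],[G_A, 0, −Δ_A, −κ, 0, 0],[0, 0, 0, 0, −κ, Δ_B],[G_B, 0, 0, 0, −Δ_B, −κ]]. Then A(G_A, G_B) has the same characteristic polynomial (equivalently, the same eigenvalues with multiplicity) as the decoupled matrix A(0, 0) if and only if G_A = G_B and Δ_A = −Δ_B. -/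
open Matrix

noncomputable section

/-- Drift matrix of the linearized quantum Langevin equations of a bichromatically
driven cavity with a movable mirror, in the quadrature basis
`(δq, δp, δX_A, δY_A, δX_B, δY_B)`. -/
def driftA2 (ω γ κ ΔA ΔB GA GB : ℝ) : Matrix (Fin 6) (Fin 6) ℝ :=
  !![0, ω, 0, 0, 0, 0;
     -ω, -γ, GA, 0, GB, 0;
     0, 0, -κ, ΔA, 0, 0;
     GA, 0, -ΔA, -κ, 0, 0;
     0, 0, 0, 0, -κ, ΔB;
     GB, 0, 0, 0, -ΔB, -κ]

open Polynomial

set_option maxRecDepth 8000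
set_option maxHeartbeats 2000000

@[simp] lemma cons_val_five' {α : Type*} (a : α) (s : Fin 5 → α) :
    vecCons a s 5 = s 4 := rfl

lemma charmatrix_driftA2 (ω γ κ ΔA ΔB GA GB : ℝ) :
    charmatrix (driftA2 ω γ κ ΔA ΔB GA GB) =
    !![X, -C ω, 0, 0, 0, 0;
       C ω, X + C γ, -C GA, 0, -C GB, 0;
       0, 0, X + C κ, -C ΔA, 0, 0;
       -C GA, 0, C ΔA, X + C κ, 0, 0;
       0, 0, 0, 0, X + C κ, -C ΔB;
       -C GB, 0, 0, 0, C ΔB, X + C κ] := by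
  ext i j
  fin_cases i <;> fin_cases j <;>
    simp [charmatrix_apply_eq, charmatrix_apply_ne, driftA2, Matrix.vecHead, Matrix.vecTail]

lemma charpoly_driftA2 (ω γ κ ΔA ΔB GA GB : ℝ) :
    (driftA2 ω γ κ ΔA ΔB GA GB).charpoly =
    X^6 + C (4*κ+γ) * X^5
      + C (ΔB^2 + ΔA^2 + 6*κ^2 + 4*γ*κ + ω^2) * X^4
      + C (2*κ*ΔB^2 + 2*κ*ΔA^2 + 4*κ^3 + γ*ΔB^2 + γ*ΔA^2 + 6*γ*κ^2 + 4*ω^2*κ) * X^3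
      + C (ΔA^2*ΔB^2 + κ^2*ΔB^2 + κ^2*ΔA^2 + κ^4 + 2*γ*κ*ΔB^2 + 2*γ*κ*ΔA^2 + 4*γ*κ^3
           - ω*ΔB*GB^2 - ω*ΔA*GA^2 + ω^2*ΔB^2 + ω^2*ΔA^2 + 6*ω^2*κ^2) * X^2
      + C (γ*ΔA^2*ΔB^2 + γ*κ^2*ΔB^2 + γ*κ^2*ΔA^2 + γ*κ^4 - 2*ω*κ*ΔB*GB^2 - 2*ω*κ*ΔA*GA^2
           + 2*ω^2*κ*ΔB^2 + 2*ω^2*κ*ΔA^2 + 4*ω^2*κ^3) * X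
      + C (-(ω*ΔA*ΔB^2*GA^2) - ω*ΔA^2*ΔB*GB^2 - ω*κ^2*ΔB*GB^2 - ω*κ^2*ΔA*GA^2
           + ω^2*ΔA^2*ΔB^2 + ω^2*κ^2*ΔB^2 + ω^2*κ^2*ΔA^2 + ω^2*κ^4) := by
  rw [Matrix.charpoly, charmatrix_driftA2]
  simp [Matrix.det_succ_row_zero, Fin.sum_univ_succ, Fin.succAbove, Matrix.submatrix_apply,
    Matrix.vecHead, Matrix.vecTail, Fin.castSucc, Fin.castAdd, Fin.castLE]
  try simp only [map_ofNat]
  try ring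

/-- the coupled drift matrix has the same characteristic polynomial
(equivalently, the same eigenvalues with multiplicity) as the decoupled one
(`G_A = G_B = 0`) iff `G_A = G_B` and `Δ_A = −Δ_B` (balanced cooling/heating). -/
theorem bichromatic_charpoly_independent_iff (ω γ κ ΔA ΔB GA GB : ℝ)
    (hκ : 0 < κ) (hω : 0 < ω) (hGA : 0 < GA) (hGB : 0 < GB)
    (hΔ : (ΔA, ΔB) ≠ (0, 0)) :
    (driftA2 ω γ κ ΔA ΔB GA GB).charpoly = (driftA2 ω γ κ ΔA ΔB 0 0).charpoly ↔
      (GA = GB ∧ ΔA = -ΔB) := by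
  rw [charpoly_driftA2, charpoly_driftA2]
  constructor
  · intro h
    simp only [_root_.map_mul, map_add, map_sub, map_neg, _root_.map_pow, map_ofNat,
      _root_.map_one, map_zero] at h
    have hd : C (ω*ΔB*GB^2 + ω*ΔA*GA^2) * X^2 + C (2*ω*κ*ΔB*GB^2 + 2*ω*κ*ΔA*GA^2) * X
        + C (ω*ΔA*ΔB^2*GA^2 + ω*ΔA^2*ΔB*GB^2 + ω*κ^2*ΔB*GB^2 + ω*κ^2*ΔA*GA^2) = 0 := by
      simp only [_root_.map_mul, map_add, map_sub, map_neg, _root_.map_pow, map_ofNat,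
        _root_.map_one, map_zero]
      linear_combination -h
    have ha : ω*ΔB*GB^2 + ω*ΔA*GA^2 = 0 := by
      have := congrArg (fun p => Polynomial.coeff p 2) hd
      simp only [Polynomial.coeff_add, Polynomial.coeff_C_mul, Polynomial.coeff_X_pow,
        Polynomial.coeff_C, Polynomial.coeff_X, Polynomial.coeff_zero] at this
      norm_num at this
      linarith [this]
    have hc : ω*ΔA*ΔB^2*GA^2 + ω*ΔA^2*ΔB*GB^2 + ω*κ^2*ΔB*GB^2 + ω*κ^2*ΔA*GA^2 = 0 := by
      have := congrArg (fun p => Polynomial.coeff p 0) hd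
      simp only [Polynomial.coeff_add, Polynomial.coeff_C_mul, Polynomial.coeff_X_pow,
        Polynomial.coeff_C, Polynomial.coeff_X, Polynomial.coeff_zero] at this
      norm_num at this
      linarith [this]
    have hω' : ω ≠ 0 := hω.ne'
    have hGA2 : (GA:ℝ)^2 ≠ 0 := by positivity
    have hGB2 : (GB:ℝ)^2 ≠ 0 := by positivity
    have eq1 : GA^2*ΔA + GB^2*ΔB = 0 := by
      have : ω * (GA^2*ΔA + GB^2*ΔB) = 0 := by linear_combination ha
      exact (mul_eq_zero.1 this).resolve_left hω'
    have eq2 : ΔA * ΔB * (GA^2*ΔB + GB^2*ΔA) = 0 := by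
      have : ω * (ΔA * ΔB * (GA^2*ΔB + GB^2*ΔA)) = 0 := by
        linear_combination hc - (κ^2) * ha
      exact (mul_eq_zero.1 this).resolve_left hω'
    have hA : ΔA ≠ 0 := by
      intro hA0
      have h1 : GB^2*ΔB = 0 := by linear_combination eq1 - GA^2 * hA0
      have hB0 : ΔB = 0 := (mul_eq_zero.1 h1).resolve_left hGB2
      exact hΔ (by simp [hA0, hB0])
    have hB : ΔB ≠ 0 := by
      intro hB0
      have h1 : GA^2*ΔA = 0 := by linear_combination eq1 - GB^2 * hB0
      have hA0 : ΔA = 0 := (mul_eq_zero.1 h1).resolve_left hGA2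
      exact hΔ (by simp [hA0, hB0])
    have eq3 : GA^2*ΔB + GB^2*ΔA = 0 :=
      ((mul_eq_zero.1 eq2).resolve_left (mul_ne_zero hA hB))
    have hsum : ΔA = -ΔB := by
      have h1 : (GA^2 + GB^2) * (ΔA + ΔB) = 0 := by linear_combination eq1 + eq3
      have := (mul_eq_zero.1 h1).resolve_left (by positivity)
      linarith
    refine ⟨?_, hsum⟩
    have h1 : ΔA * ((GA - GB) * (GA + GB)) = 0 := by
      linear_combination eq1 - GB^2 * hsum
    have h2 := (mul_eq_zero.1 h1).resolve_left hA
    have h3 := (mul_eq_zero.1 h2).resolve_right (by positivity : (0:ℝ) < GA + GB).ne'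
    linarith
  · rintro ⟨hG, hD⟩
    subst hG hD
    simp only [_root_.map_mul, map_add, map_sub, map_neg, _root_.map_pow, map_ofNat,
      _root_.map_one, map_zero]
    ring
end
end

section
/- Let ω, γ, κ > 0 and G, Δ ∈ ℝ, and let A be the real 6×6 matrix [[0, ω, 0, 0, 0, 0],[−ω, −γ, G, 0, G, 0],[0, 0, −κ, Δ, 0, 0],[G, 0, −Δ, −κ, 0, 0],[0, 0, 0, 0, −κ, −Δ],[G, 0, 0, 0, Δ, −κ]] (the bichromatically driven optomechanical drift matrix with balanced couplings G_A = G_B = G and opposite detunings Δ_A = Δ, Δ_B = −Δ). Then every eigenvalue of A over ℂ has strictly negative real part; in particular, the steady state is stable for all values of G and Δ. -/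
open Matrix

noncomputable section

/-- Drift matrix of the bichromatically driven optomechanical system with balanced
couplings `G_A = G_B = G` and opposite detunings `Δ_A = Δ`, `Δ_B = −Δ`, in the
quadrature basis `(δq, δp, δX_A, δY_A, δX_B, δY_B)`. -/
def driftBal (ω γ κ G Δ : ℝ) : Matrix (Fin 6) (Fin 6) ℝ :=
  !![0, ω, 0, 0, 0, 0;
     -ω, -γ, G, 0, G, 0;
     0, 0, -κ, Δ, 0, 0;
     G, 0, -Δ, -κ, 0, 0;
     0, 0, 0, 0, -κ, -Δ;
     G, 0, 0, 0, Δ, -κ]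

/-- If `z` is in the spectrum of a matrix, the determinant of `z·1 − M` vanishes. -/
lemma det_algebraMap_sub_eq_zero_of_mem_spectrum {n : Type*} [Fintype n] [DecidableEq n]
    (M : Matrix n n ℂ) (z : ℂ) (h : z ∈ spectrum ℂ M) :
    (algebraMap ℂ (Matrix n n ℂ) z - M).det = 0 := by
  by_contra hd
  exact (spectrum.mem_iff.mp h) ((Matrix.isUnit_iff_isUnit_det _).mpr (isUnit_iff_ne_zero.mpr hd))

/-- Roots of a mechanical-type quadratic `z² + γz + ω² = 0` with `γ, ω > 0` have
negative real part. -/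
lemma quad_re_neg (γ ω : ℝ) (hγ : 0 < γ) (hω : 0 < ω) (z : ℂ)
    (h : z ^ 2 + (γ : ℂ) * z + (ω : ℂ) ^ 2 = 0) : z.re < 0 := by
  have hre := congrArg Complex.re h
  have him := congrArg Complex.im h
  simp [Complex.add_re, Complex.add_im, Complex.mul_re, Complex.mul_im, pow_two] at hre him
  rcases mul_eq_zero.mp (show z.im * (2 * z.re + γ) = 0 by linarith) with h1 | h1
  · rw [h1] at hre
    nlinarith [sq_nonneg z.re, sq_nonneg (z.re + γ / 2)]
  · linarith

/-- Roots of a cavity-type quadratic `(z + κ)² + Δ² = 0` with `κ > 0` have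
negative real part. -/
lemma shift_re_neg (κ Δ : ℝ) (hκ : 0 < κ) (z : ℂ)
    (h : (z + (κ : ℂ)) ^ 2 + (Δ : ℂ) ^ 2 = 0) : z.re < 0 := by
  have hre := congrArg Complex.re h
  have him := congrArg Complex.im h
  simp [Complex.add_re, Complex.add_im, Complex.mul_re, Complex.mul_im, pow_two] at hre him
  rcases mul_eq_zero.mp (show (z.re + κ) * (2 * z.im) = 0 by linarith) with h1 | h1
  · linarith
  · have hz : z.im = 0 := by linarith
    rw [hz] at hre
    nlinarith [sq_nonneg (z.re + κ), sq_nonneg Δ]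

lemma cons_val_five {α : Type*} {m : ℕ} (x : α) (u : Fin (m+5) → α) :
    Matrix.vecCons x u 5 = Matrix.vecHead (Matrix.vecTail (Matrix.vecTail
      (Matrix.vecTail (Matrix.vecTail u)))) :=
  rfl

set_option maxHeartbeats 2000000
set_option maxRecDepth 40000

/-- The determinant of a matrix of the balanced-bichromatic shape factors as the
product of the mechanical quadratic and the square of the cavity quadratic; in
particular it is independent of the coupling `g`. -/
lemma det_bal_factor (a b c d e g : ℂ) :
    (!![a, -b, 0, 0, 0, 0;
        b, a + c, -g, 0, -g, 0;
        0, 0, a + d, -e, 0, 0;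
        -g, 0, e, a + d, 0, 0;
        0, 0, 0, 0, a + d, e;
        -g, 0, 0, 0, -e, a + d]).det
      = (a ^ 2 + c * a + b ^ 2) * ((a + d) ^ 2 + e ^ 2) ^ 2 := by
  simp [Matrix.det_succ_row_zero, Fin.sum_univ_succ, Fin.succAbove]
  ring

/-- in the balanced bichromatic regime every complex eigenvalue of
the drift matrix has strictly negative real part; the steady state is stable for all
values of `G` and `Δ`. -/
theorem balanced_bichromatic_stable (ω γ κ G Δ : ℝ)
    (hω : 0 < ω) (hγ : 0 < γ) (hκ : 0 < κ) :
    ∀ z ∈ spectrum ℂ ((driftBal ω γ κ G Δ).map Complex.ofReal), z.re < 0 := by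
  intro z hz
  have hdet := det_algebraMap_sub_eq_zero_of_mem_spectrum _ z hz
  have hM : algebraMap ℂ (Matrix (Fin 6) (Fin 6) ℂ) z
      - (driftBal ω γ κ G Δ).map Complex.ofReal
      = !![z, -(ω : ℂ), 0, 0, 0, 0;
           (ω : ℂ), z + (γ : ℂ), -(G : ℂ), 0, -(G : ℂ), 0;
           0, 0, z + (κ : ℂ), -(Δ : ℂ), 0, 0;
           -(G : ℂ), 0, (Δ : ℂ), z + (κ : ℂ), 0, 0;
           0, 0, 0, 0, z + (κ : ℂ), (Δ : ℂ);
           -(G : ℂ), 0, 0, 0, -(Δ : ℂ), z + (κ : ℂ)] := by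
    ext i j
    fin_cases i <;> fin_cases j <;>
      simp [driftBal, Matrix.algebraMap_matrix_apply, Matrix.map_apply, sub_eq_add_neg, cons_val_five, Matrix.vecHead, Matrix.vecTail]
  rw [hM, det_bal_factor] at hdet
  rcases mul_eq_zero.mp hdet with h | h
  · exact quad_re_neg γ ω hγ hω z (by linear_combination h)
  · exact shift_re_neg κ Δ hκ z (pow_eq_zero_iff two_ne_zero |>.mp h)

end
end
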